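/- arXiv:1512.07091 — 5 statements merged into one kernel-verified Lean document; each statement's English description precedes it below -/
import Mathlib

section
/- Let A and L be symmetric positive definite n×n real matrices, let P be an n×m real matrix with full column rank, set A_c := PᵀAP and T := P·A_c⁻¹·Pᵀ·A, and let C_A > 0. Then the matrix (I−T)·A⁻¹ is symmetric, and the following two statements are equivalent: (i) ((I−T)u)ᵀ·L·((I−T)u) ≤ C_A·uᵀ·A·u for all u ∈ ℝⁿ; (ii) (I−T)·A⁻¹ ≼ C_A·L⁻¹. -/
open Matrix

lemma dot_tmv {k l : ℕ} (B : Matrix (Fin k) (Fin l) ℝ) (x : Fin k → ℝ) (w : Fin l → ℝ) :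
    x ⬝ᵥ (B *ᵥ w) = (Bᵀ *ᵥ x) ⬝ᵥ w := by
  rw [dotProduct_mulVec, mulVec_transpose]

lemma dot_mv_mv {k : ℕ} (M N : Matrix (Fin k) (Fin k) ℝ) (v w : Fin k → ℝ) :
    (M *ᵥ v) ⬝ᵥ (N *ᵥ w) = v ⬝ᵥ ((Mᵀ * N) *ᵥ w) := by
  conv_rhs => rw [← mulVec_mulVec, dot_tmv, transpose_transpose]

lemma psd_nonneg {k : ℕ} {S : Matrix (Fin k) (Fin k) ℝ} (hS : S.PosSemidef) (x : Fin k → ℝ) :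
    0 ≤ x ⬝ᵥ S *ᵥ x := by
  simpa using hS.dotProduct_mulVec_nonneg x

lemma psd_cs {k : ℕ} {S : Matrix (Fin k) (Fin k) ℝ} (hS : S.PosSemidef) (x y : Fin k → ℝ) :
    (x ⬝ᵥ S *ᵥ y)^2 ≤ (x ⬝ᵥ S *ᵥ x) * (y ⬝ᵥ S *ᵥ y) := by
  have hsymm : Sᵀ = S := by
    have := hS.1
    rwa [IsHermitian, conjTranspose_eq_transpose_of_trivial] at this
  have hswap : ∀ a b : Fin k → ℝ, a ⬝ᵥ S *ᵥ b = b ⬝ᵥ S *ᵥ a := by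
    intro a b
    rw [dot_tmv, hsymm, dotProduct_comm]
  have key : ∀ t : ℝ, 0 ≤ (y ⬝ᵥ S *ᵥ y) * (t*t) + (2 * (x ⬝ᵥ S *ᵥ y)) * t + x ⬝ᵥ S *ᵥ x := by
    intro t
    have h0 := psd_nonneg hS (x + t • y)
    have : (x + t • y) ⬝ᵥ S *ᵥ (x + t • y)
        = (y ⬝ᵥ S *ᵥ y) * (t*t) + (2 * (x ⬝ᵥ S *ᵥ y)) * t + x ⬝ᵥ S *ᵥ x := by
      rw [mulVec_add, mulVec_smul, add_dotProduct, smul_dotProduct,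
        dotProduct_add, dotProduct_add, dotProduct_smul, dotProduct_smul,
        hswap y x]
      simp [smul_eq_mul]; ring
    linarith [this ▸ h0]
  have hd := discrim_le_zero key
  rw [discrim] at hd
  nlinarith [hd]

/-- The `Q`-norm of a vector: `‖v‖_Q := √(vᵀ Q v)`. -/
noncomputable def matNorm {n : ℕ} (Q : Matrix (Fin n) (Fin n) ℝ) (v : Fin n → ℝ) : ℝ :=
  Real.sqrt (v ⬝ᵥ Q *ᵥ v)

/-- With `A`, `L` SPD, `P` of full column rank, `A_c = PᵀAP`,
`T = P A_c⁻¹ Pᵀ A`, and `C_A > 0`, the matrix `(I−T) A⁻¹` is symmetric, and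
`‖(I−T)u‖_L² ≤ C_A ‖u‖_A²` for all `u` is equivalent to `(I−T) A⁻¹ ≼ C_A L⁻¹`. -/
theorem stmt0 {n m : ℕ} (A L : Matrix (Fin n) (Fin n) ℝ)
    (hA : A.PosDef) (hL : L.PosDef)
    (P : Matrix (Fin n) (Fin m) ℝ) (hP : P.rank = m)
    (C_A : ℝ) (hCA : 0 < C_A)
    (T : Matrix (Fin n) (Fin n) ℝ) (hT : T = P * (Pᵀ * A * P)⁻¹ * (Pᵀ * A)) :
    ((1 - T) * A⁻¹).IsSymm ∧
    ((∀ u : Fin n → ℝ,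
        ((1 - T) *ᵥ u) ⬝ᵥ L *ᵥ ((1 - T) *ᵥ u) ≤ C_A * (u ⬝ᵥ A *ᵥ u))
      ↔ (C_A • L⁻¹ - (1 - T) * A⁻¹).PosSemidef) := by
  -- injectivity of P
  have hPinj : ∀ v : Fin m → ℝ, P *ᵥ v = 0 → v = 0 := by
    intro v hv
    have h1 := LinearMap.finrank_range_add_finrank_ker (P.mulVecLin)
    rw [show Module.finrank ℝ (LinearMap.range P.mulVecLin) = P.rank from rfl, hP,
      Module.finrank_pi, Fintype.card_fin] at h1
    have hker : LinearMap.ker P.mulVecLin = ⊥ :=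
      Submodule.finrank_eq_zero.mp (by omega)
    have : v ∈ LinearMap.ker P.mulVecLin := by simpa [LinearMap.mem_ker] using hv
    rw [hker] at this; simpa using this
  have hAsymm : Aᵀ = A := by
    have := hA.1; rwa [IsHermitian, conjTranspose_eq_transpose_of_trivial] at this
  have hLsymm : Lᵀ = L := by
    have := hL.1; rwa [IsHermitian, conjTranspose_eq_transpose_of_trivial] at this
  -- A_c posdef
  have hAc : (Pᵀ * A * P).PosDef := by
    refine posDef_iff_dotProduct_mulVec.mpr ⟨?_, ?_⟩
    · rw [IsHermitian, conjTranspose_eq_transpose_of_trivial,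
        transpose_mul, transpose_mul, transpose_transpose, hAsymm, Matrix.mul_assoc]
    · intro x hx
      have hPx : P *ᵥ x ≠ 0 := fun h => hx (hPinj x h)
      have h2 := hA.dotProduct_mulVec_pos hPx
      have e : x ⬝ᵥ ((Pᵀ * A * P) *ᵥ x) = (P *ᵥ x) ⬝ᵥ (A *ᵥ (P *ᵥ x)) := by
        rw [← mulVec_mulVec, ← mulVec_mulVec, dot_tmv, transpose_transpose]
      simpa [star_trivial, e] using h2
  set B : Matrix (Fin m) (Fin n) ℝ := Pᵀ * A with hB
  set Q : Matrix (Fin m) (Fin m) ℝ := (B * P)⁻¹ with hQ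
  -- inverse identities
  have hAdet : IsUnit A.det := (Matrix.isUnit_iff_isUnit_det A).mp hA.isUnit
  have hAcdet : IsUnit (B * P).det := (Matrix.isUnit_iff_isUnit_det _).mp hAc.isUnit
  have hAAi : A * A⁻¹ = 1 := mul_nonsing_inv A hAdet
  have hAiA : A⁻¹ * A = 1 := nonsing_inv_mul A hAdet
  have hBPQ : (B * P) * Q = 1 := mul_nonsing_inv _ hAcdet
  have hQBP : Q * (B * P) = 1 := nonsing_inv_mul _ hAcdet
  have hAisymm : (A⁻¹)ᵀ = A⁻¹ := by rw [transpose_nonsing_inv, hAsymm]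
  have hLisymm : (L⁻¹)ᵀ = L⁻¹ := by rw [transpose_nonsing_inv, hLsymm]
  have hBPsymm : (B * P)ᵀ = B * P := by
    rw [hB, transpose_mul, transpose_mul, transpose_transpose, hAsymm, Matrix.mul_assoc]
  have hQsymm : Qᵀ = Q := by rw [hQ, transpose_nonsing_inv, hBPsymm]
  have hBAi : B * A⁻¹ = Pᵀ := by rw [hB, Matrix.mul_assoc, hAAi, Matrix.mul_one]
  have hTT : T * T = T := by
    calc T * T = P * Q * ((B * P) * Q) * B := by rw [hT]; simp only [Matrix.mul_assoc]
    _ = T := by rw [hBPQ, Matrix.mul_one, hT]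
  set S : Matrix (Fin n) (Fin n) ℝ := (1 - T) * A⁻¹ with hSdef
  have hTAi : T * A⁻¹ = P * Q * Pᵀ := by
    calc T * A⁻¹ = P * Q * (B * A⁻¹) := by rw [hT]; simp only [Matrix.mul_assoc]
    _ = P * Q * Pᵀ := by rw [hBAi]
  have hSeq : S = A⁻¹ - P * Q * Pᵀ := by
    rw [hSdef, Matrix.sub_mul, Matrix.one_mul, hTAi]
  have hSsymm : Sᵀ = S := by
    rw [hSeq, transpose_sub, hAisymm, transpose_mul, transpose_mul,
      transpose_transpose, hQsymm, Matrix.mul_assoc]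
  have hSA : S * A = 1 - T := by
    rw [hSdef, Matrix.mul_assoc, hAiA, Matrix.mul_one]
  have hTS : T * S = 0 := by
    have h1 : T * (1 - T) = 0 := by
      rw [Matrix.mul_sub, Matrix.mul_one, hTT, sub_self]
    rw [hSdef, ← Matrix.mul_assoc, h1, Matrix.zero_mul]
  have hES : (1 - T) * S = S := by
    rw [Matrix.sub_mul, Matrix.one_mul, hTS, sub_zero]
  have hSAS : S * (A * S) = S := by
    rw [← Matrix.mul_assoc, hSA, hES]
  -- positive semidefiniteness facts
  have hQpsd : Q.PosSemidef := hAc.inv.posSemidef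
  have hATpsd : (A * T).PosSemidef := by
    have h1 := hQpsd.mul_mul_conjTranspose_same (A * P)
    have e : (A * P) * Q * (A * P)ᴴ = A * T := by
      rw [conjTranspose_eq_transpose_of_trivial, transpose_mul, hAsymm, ← hB, hT]
      simp only [Matrix.mul_assoc]
    rwa [e] at h1
  have hSpsd : S.PosSemidef := by
    have h1 := hA.inv.posSemidef.mul_mul_conjTranspose_same (1 - T)
    have e : (1 - T) * A⁻¹ * (1 - T)ᴴ = S := by
      rw [conjTranspose_eq_transpose_of_trivial, Matrix.mul_assoc]
      have e2 : A⁻¹ * (1 - T)ᵀ = S := by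
        rw [← hAisymm, ← transpose_mul, ← hSdef, hSsymm]
      rw [e2, hES]
    rwa [e] at h1
  have hAE_le : ∀ u : Fin n → ℝ, u ⬝ᵥ ((A * (1 - T)) *ᵥ u) ≤ u ⬝ᵥ A *ᵥ u := by
    intro u
    have h1 := psd_nonneg hATpsd u
    have e : (A * (1 - T)) *ᵥ u = A *ᵥ u - (A * T) *ᵥ u := by
      rw [Matrix.mul_sub, Matrix.mul_one, sub_mulVec]
    rw [e, dotProduct_sub]
    linarith
  have hLipsd : (L⁻¹).PosSemidef := hL.inv.posSemidef
  have hLdet : IsUnit L.det := (Matrix.isUnit_iff_isUnit_det L).mp hL.isUnit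
  have hLLi : L * L⁻¹ = 1 := mul_nonsing_inv L hLdet
  have hLiL : L⁻¹ * L = 1 := nonsing_inv_mul L hLdet
  refine ⟨hSsymm, ?_, ?_⟩
  · -- (i) → (ii)
    intro h
    refine posSemidef_iff_dotProduct_mulVec.mpr ⟨?_, ?_⟩
    · rw [IsHermitian, conjTranspose_eq_transpose_of_trivial, transpose_sub,
        transpose_smul, hLisymm, hSsymm]
    · intro v
      rw [star_trivial]
      have e : v ⬝ᵥ ((C_A • L⁻¹ - S) *ᵥ v)
          = C_A * (v ⬝ᵥ L⁻¹ *ᵥ v) - v ⬝ᵥ S *ᵥ v := by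
        rw [sub_mulVec, dotProduct_sub, smul_mulVec, dotProduct_smul, smul_eq_mul]
      rw [e]
      have hsnn : 0 ≤ v ⬝ᵥ S *ᵥ v := psd_nonneg hSpsd v
      have htnn : 0 ≤ v ⬝ᵥ L⁻¹ *ᵥ v := psd_nonneg hLipsd v
      have h1 := h (S *ᵥ v)
      rw [mulVec_mulVec, hES] at h1
      have e1 : (S *ᵥ v) ⬝ᵥ (A *ᵥ (S *ᵥ v)) = v ⬝ᵥ S *ᵥ v := by
        rw [mulVec_mulVec, dot_mv_mv, hSsymm, hSAS]
      rw [e1] at h1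
      have hcs := psd_cs hL.posSemidef (S *ᵥ v) (L⁻¹ *ᵥ v)
      have e2 : (S *ᵥ v) ⬝ᵥ (L *ᵥ (L⁻¹ *ᵥ v)) = v ⬝ᵥ S *ᵥ v := by
        rw [mulVec_mulVec, hLLi, one_mulVec, dotProduct_comm]
      have e3 : (L⁻¹ *ᵥ v) ⬝ᵥ (L *ᵥ (L⁻¹ *ᵥ v)) = v ⬝ᵥ L⁻¹ *ᵥ v := by
        rw [mulVec_mulVec, hLLi, one_mulVec, dotProduct_comm]
      rw [e2, e3] at hcs
      have key : (v ⬝ᵥ S *ᵥ v)^2 ≤ (C_A * (v ⬝ᵥ S *ᵥ v)) * (v ⬝ᵥ L⁻¹ *ᵥ v) :=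
        le_trans hcs (mul_le_mul_of_nonneg_right h1 htnn)
      rcases lt_or_ge 0 (v ⬝ᵥ S *ᵥ v) with hpos | hle
      · nlinarith [key, hpos, htnn]
      · linarith [mul_nonneg hCA.le htnn]
  · -- (ii) → (i)
    intro h u
    have hps2 : ∀ x : Fin n → ℝ, x ⬝ᵥ S *ᵥ x ≤ C_A * (x ⬝ᵥ L⁻¹ *ᵥ x) := by
      intro x
      have h2 := h.dotProduct_mulVec_nonneg x
      rw [star_trivial, sub_mulVec, dotProduct_sub, smul_mulVec,
        dotProduct_smul, smul_eq_mul] at h2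
      linarith
    obtain ⟨w, hw⟩ : ∃ w, (1 - T) *ᵥ u = w := ⟨_, rfl⟩
    rw [hw]
    have hann : 0 ≤ w ⬝ᵥ L *ᵥ w := psd_nonneg hL.posSemidef _
    have hAu : 0 ≤ u ⬝ᵥ A *ᵥ u := psd_nonneg hA.posSemidef u
    have e0 : S *ᵥ (A *ᵥ u) = w := by rw [mulVec_mulVec, hSA, hw]
    have ea : w ⬝ᵥ L *ᵥ w = (L *ᵥ w) ⬝ᵥ (S *ᵥ (A *ᵥ u)) := by
      rw [e0, dotProduct_comm]
    have hcs := psd_cs hSpsd (L *ᵥ w) (A *ᵥ u)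
    rw [← ea] at hcs
    have b1 : (L *ᵥ w) ⬝ᵥ S *ᵥ (L *ᵥ w) ≤ C_A * (w ⬝ᵥ L *ᵥ w) := by
      have h3 := hps2 (L *ᵥ w)
      have e3 : (L *ᵥ w) ⬝ᵥ (L⁻¹ *ᵥ (L *ᵥ w)) = w ⬝ᵥ L *ᵥ w := by
        rw [mulVec_mulVec, hLiL, one_mulVec, dotProduct_comm]
      rwa [e3] at h3
    have b2 : (A *ᵥ u) ⬝ᵥ S *ᵥ (A *ᵥ u) ≤ u ⬝ᵥ A *ᵥ u := by
      have e4 : (A *ᵥ u) ⬝ᵥ (S *ᵥ (A *ᵥ u)) = u ⬝ᵥ ((A * (1 - T)) *ᵥ u) := by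
        rw [mulVec_mulVec, hSA, dot_mv_mv, hAsymm]
      rw [e4]
      exact hAE_le u
    have hSAu : 0 ≤ (A *ᵥ u) ⬝ᵥ S *ᵥ (A *ᵥ u) := psd_nonneg hSpsd _
    have key : (w ⬝ᵥ L *ᵥ w)^2 ≤ (C_A * (w ⬝ᵥ L *ᵥ w)) * (u ⬝ᵥ A *ᵥ u) := by
      calc (w ⬝ᵥ L *ᵥ w)^2 ≤ ((L *ᵥ w) ⬝ᵥ S *ᵥ (L *ᵥ w)) * ((A *ᵥ u) ⬝ᵥ S *ᵥ (A *ᵥ u)) := hcs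
      _ ≤ ((L *ᵥ w) ⬝ᵥ S *ᵥ (L *ᵥ w)) * (u ⬝ᵥ A *ᵥ u) :=
          mul_le_mul_of_nonneg_left b2 (psd_nonneg hSpsd _)
      _ ≤ (C_A * (w ⬝ᵥ L *ᵥ w)) * (u ⬝ᵥ A *ᵥ u) :=
          mul_le_mul_of_nonneg_right b1 hAu
    rcases lt_or_ge 0 (w ⬝ᵥ L *ᵥ w) with hpos | hle
    · nlinarith [key, hpos, hAu]
    · linarith [mul_nonneg hCA.le hAu]
end

section
/- Let A and L be SPD n×n matrices and C_I > 0 a constant with uᵀ·A·u ≤ C_I·uᵀ·L·u for all u ∈ ℝⁿ. Let τ ∈ (0, 1/C_I], let ν ≥ 1 be an integer, and set S := I − τ·L⁻¹·A. Then: (a) the matrix A·Sᵛ is symmetric and 0 ≤ uᵀ·A·Sᵛ·u ≤ (τ·ν)⁻¹·uᵀ·L·u for all u ∈ ℝⁿ (smoothing property); and (b) ‖S·u‖_A ≤ ‖u‖_A for all u ∈ ℝⁿ. -/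
open Matrix

variable {n : ℕ}

/-- Functional calculus via the spectral theorem. -/
noncomputable def funCalc {X : Matrix (Fin n) (Fin n) ℝ} (hX : X.IsHermitian) (f : ℝ → ℝ) :
    Matrix (Fin n) (Fin n) ℝ :=
  (hX.eigenvectorUnitary : Matrix (Fin n) (Fin n) ℝ) * diagonal (f ∘ hX.eigenvalues)
    * (star hX.eigenvectorUnitary : Matrix (Fin n) (Fin n) ℝ)

lemma funCalc_id {X : Matrix (Fin n) (Fin n) ℝ} (hX : X.IsHermitian) :
    funCalc hX (fun x => x) = X := by
  have := hX.spectral_theorem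
  simpa [funCalc, Function.comp_def] using this.symm

lemma funCalc_one {X : Matrix (Fin n) (Fin n) ℝ} (hX : X.IsHermitian) :
    funCalc hX (fun _ => 1) = 1 := by
  have h : (diagonal ((fun _ => (1:ℝ)) ∘ hX.eigenvalues)) = (1 : Matrix (Fin n) (Fin n) ℝ) :=
    diagonal_one
  rw [funCalc, h, mul_one]
  exact (Matrix.mem_unitaryGroup_iff).mp hX.eigenvectorUnitary.2

lemma funCalc_sub {X : Matrix (Fin n) (Fin n) ℝ} (hX : X.IsHermitian) (f g : ℝ → ℝ) :
    funCalc hX (fun x => f x - g x) = funCalc hX f - funCalc hX g := by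
  have : diagonal ((fun x => f x - g x) ∘ hX.eigenvalues)
      = diagonal (f ∘ hX.eigenvalues) - diagonal (g ∘ hX.eigenvalues) := by
    ext i j; by_cases h : i = j <;> simp [diagonal, h]
  unfold funCalc
  rw [this, Matrix.mul_sub, Matrix.sub_mul]

lemma funCalc_smul {X : Matrix (Fin n) (Fin n) ℝ} (hX : X.IsHermitian) (c : ℝ) (f : ℝ → ℝ) :
    funCalc hX (fun x => c * f x) = c • funCalc hX f := by
  have : diagonal ((fun x => c * f x) ∘ hX.eigenvalues)
      = c • diagonal (f ∘ hX.eigenvalues) := by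
    ext i j; by_cases h : i = j <;> simp [diagonal, h]
  unfold funCalc
  rw [this, Matrix.mul_smul, Matrix.smul_mul]

lemma funCalc_mul {X : Matrix (Fin n) (Fin n) ℝ} (hX : X.IsHermitian) (f g : ℝ → ℝ) :
    funCalc hX (fun x => f x * g x) = funCalc hX f * funCalc hX g := by
  have hU : (star hX.eigenvectorUnitary : Matrix (Fin n) (Fin n) ℝ) *
      (hX.eigenvectorUnitary : Matrix (Fin n) (Fin n) ℝ) = 1 :=
    (Matrix.mem_unitaryGroup_iff').mp hX.eigenvectorUnitary.2
  simp only [funCalc, Matrix.mul_assoc]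
  rw [← Matrix.mul_assoc (star hX.eigenvectorUnitary : Matrix (Fin n) (Fin n) ℝ), hU, Matrix.one_mul,
    ← Matrix.mul_assoc (diagonal (f ∘ hX.eigenvalues)), diagonal_mul_diagonal]
  have : (fun i => (f ∘ hX.eigenvalues) i * (g ∘ hX.eigenvalues) i)
      = (fun x => f x * g x) ∘ hX.eigenvalues := rfl
  rw [this]

lemma funCalc_pow {X : Matrix (Fin n) (Fin n) ℝ} (hX : X.IsHermitian) (f : ℝ → ℝ) (k : ℕ) :
    funCalc hX (fun x => (f x) ^ k) = (funCalc hX f) ^ k := by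
  induction k with
  | zero => simpa [pow_zero] using funCalc_one hX
  | succ m ih =>
    rw [pow_succ, ← ih, ← funCalc_mul hX (fun x => (f x)^m) f]
    congr 1

lemma star_unitary_real {X : Matrix (Fin n) (Fin n) ℝ} (hX : X.IsHermitian) :
    (star hX.eigenvectorUnitary : Matrix (Fin n) (Fin n) ℝ)
      = (hX.eigenvectorUnitary : Matrix (Fin n) (Fin n) ℝ)ᵀ := by
  ext i j; simp [conjTranspose_apply]

lemma funCalc_quad {X : Matrix (Fin n) (Fin n) ℝ} (hX : X.IsHermitian) (f : ℝ → ℝ)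
    (w : Fin n → ℝ) :
    w ⬝ᵥ (funCalc hX f) *ᵥ w
      = ∑ i, f (hX.eigenvalues i)
          * (((hX.eigenvectorUnitary : Matrix (Fin n) (Fin n) ℝ)ᵀ *ᵥ w) i)^2 := by
  set U := (hX.eigenvectorUnitary : Matrix (Fin n) (Fin n) ℝ)
  set c := Uᵀ *ᵥ w with hc
  have h1 : (funCalc hX f) *ᵥ w = U *ᵥ (diagonal (f ∘ hX.eigenvalues) *ᵥ c) := by
    rw [funCalc, star_unitary_real hX]
    rw [← mulVec_mulVec, ← mulVec_mulVec]
  rw [h1, dotProduct_mulVec, ← mulVec_transpose]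
  simp only [← hc, mulVec_diagonal, dotProduct]
  congr 1; funext i
  simp [Function.comp]; ring

lemma sum_sq_transform {X : Matrix (Fin n) (Fin n) ℝ} (hX : X.IsHermitian) (w : Fin n → ℝ) :
    ∑ i, (((hX.eigenvectorUnitary : Matrix (Fin n) (Fin n) ℝ)ᵀ *ᵥ w) i)^2 = w ⬝ᵥ w := by
  set U := (hX.eigenvectorUnitary : Matrix (Fin n) (Fin n) ℝ)
  have hUU : U * Uᵀ = 1 := by
    rw [← star_unitary_real hX]
    exact (Matrix.mem_unitaryGroup_iff).mp hX.eigenvectorUnitary.2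
  have : ∑ i, ((Uᵀ *ᵥ w) i)^2 = (Uᵀ *ᵥ w) ⬝ᵥ (Uᵀ *ᵥ w) := by
    simp [dotProduct, sq]
  rw [this, dotProduct_mulVec, ← mulVec_transpose, transpose_transpose, mulVec_mulVec, hUU,
    one_mulVec]

lemma eigenvalues_bound {X : Matrix (Fin n) (Fin n) ℝ} (hX : X.IsHermitian) (a b : ℝ)
    (ha : ∀ v : Fin n → ℝ, a * (v ⬝ᵥ v) ≤ v ⬝ᵥ X *ᵥ v)
    (hb : ∀ v : Fin n → ℝ, v ⬝ᵥ X *ᵥ v ≤ b * (v ⬝ᵥ v)) (i : Fin n) :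
    a ≤ hX.eigenvalues i ∧ hX.eigenvalues i ≤ b := by
  set v : Fin n → ℝ := ⇑(hX.eigenvectorBasis i) with hv
  have hXv : X *ᵥ v = hX.eigenvalues i • v := hX.mulVec_eigenvectorBasis i
  have hquad : v ⬝ᵥ X *ᵥ v = hX.eigenvalues i * (v ⬝ᵥ v) := by
    rw [hXv, dotProduct_smul, smul_eq_mul]
  have hvne : v ≠ 0 := by
    have := hX.eigenvectorBasis.orthonormal.ne_zero i
    intro h
    apply this
    ext j
    exact congrFun h j
  have hvpos : 0 < v ⬝ᵥ v := by
    have h0 : 0 ≤ v ⬝ᵥ v := by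
      have : v ⬝ᵥ v = ∑ j, (v j)^2 := by simp [dotProduct, sq]
      rw [this]; positivity
    rcases lt_or_eq_of_le h0 with h | h
    · exact h
    · exact absurd ((dotProduct_self_eq_zero).mp h.symm) hvne
  constructor
  · have := ha v; rw [hquad] at this
    exact le_of_mul_le_mul_right this hvpos
  · have := hb v; rw [hquad] at this
    exact le_of_mul_le_mul_right this hvpos

lemma funCalc_quad_bounds {X : Matrix (Fin n) (Fin n) ℝ} (hX : X.IsHermitian) (f : ℝ → ℝ)
    (a b : ℝ) (hf : ∀ i, a ≤ f (hX.eigenvalues i) ∧ f (hX.eigenvalues i) ≤ b)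
    (w : Fin n → ℝ) :
    a * (w ⬝ᵥ w) ≤ w ⬝ᵥ (funCalc hX f) *ᵥ w ∧ w ⬝ᵥ (funCalc hX f) *ᵥ w ≤ b * (w ⬝ᵥ w) := by
  rw [funCalc_quad hX f w, ← sum_sq_transform hX w]
  set c := (hX.eigenvectorUnitary : Matrix (Fin n) (Fin n) ℝ)ᵀ *ᵥ w
  constructor
  · rw [Finset.mul_sum]
    exact Finset.sum_le_sum fun i _ => mul_le_mul_of_nonneg_right (hf i).1 (sq_nonneg _)
  · rw [Finset.mul_sum]
    exact Finset.sum_le_sum fun i _ => mul_le_mul_of_nonneg_right (hf i).2 (sq_nonneg _)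

lemma key_scalar (τ x : ℝ) (hτ : 0 < τ) (ν : ℕ) (hν : 1 ≤ ν) (hx0 : 0 ≤ x)
    (hx1 : τ * x ≤ 1) : x * (1 - τ * x) ^ ν ≤ (τ * (ν : ℝ))⁻¹ := by
  set t := τ * x with ht
  have ht0 : 0 ≤ t := mul_nonneg hτ.le hx0
  have h1t : 0 ≤ 1 - t := by linarith
  have hνpos : (0:ℝ) < ν := by exact_mod_cast hν
  -- ν * t * (1-t)^ν ≤ 1
  have hb : (ν : ℝ) * t * (1 - t) ^ ν ≤ 1 := by
    have h1 : (ν : ℝ) * t ≤ (1 + t) ^ ν := by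
      have := one_add_mul_le_pow (a := t) (by linarith) ν
      nlinarith
    have h2 : (1 + t) ^ ν * (1 - t) ^ ν ≤ 1 := by
      rw [← mul_pow]
      have : (1 + t) * (1 - t) = 1 - t^2 := by ring
      rw [this]
      apply pow_le_one₀ (by nlinarith) (by nlinarith)
    calc (ν : ℝ) * t * (1 - t) ^ ν ≤ (1 + t) ^ ν * (1 - t) ^ ν :=
          mul_le_mul_of_nonneg_right h1 (pow_nonneg h1t ν)
      _ ≤ 1 := h2
  -- conclude
  have hτν : 0 < τ * (ν:ℝ) := mul_pos hτ hνpos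
  have hkey : τ * (ν:ℝ) * (x * (1 - t) ^ ν) ≤ 1 := by
    have heq : τ * (ν:ℝ) * (x * (1 - t) ^ ν) = (ν:ℝ) * t * (1 - t) ^ ν := by
      rw [ht]; ring
    linarith
  calc x * (1 - t) ^ ν = (τ * (ν:ℝ))⁻¹ * (τ * (ν:ℝ) * (x * (1 - t) ^ ν)) := by
        field_simp
    _ ≤ (τ * (ν:ℝ))⁻¹ * 1 := mul_le_mul_of_nonneg_left hkey (inv_nonneg.mpr hτν.le)
    _ = (τ * (ν:ℝ))⁻¹ := mul_one _

lemma dot_conj {P M : Matrix (Fin n) (Fin n) ℝ} (hP : Pᵀ = P) (u : Fin n → ℝ) :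
    u ⬝ᵥ (P * M * P) *ᵥ u = (P *ᵥ u) ⬝ᵥ M *ᵥ (P *ᵥ u) := by
  rw [← mulVec_mulVec, ← mulVec_mulVec, dotProduct_mulVec, ← mulVec_transpose, hP]

lemma conjPowAux {P Q M : Matrix (Fin n) (Fin n) ℝ} (h : P * Q = 1) (k : ℕ) :
    (Q * M * P) ^ k = Q * M ^ k * P := by
  have h' : Q * P = 1 := mul_eq_one_comm.mp h
  induction k with
  | zero => simp [h']
  | succ m ih =>
    rw [pow_succ, ih, pow_succ]
    calc Q * M ^ m * P * (Q * M * P) = Q * M ^ m * (P * Q) * M * P := by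
          simp only [Matrix.mul_assoc]
      _ = Q * (M ^ m * M) * P := by rw [h]; simp only [Matrix.mul_one, Matrix.mul_assoc]

lemma dot_conj' (Q M P : Matrix (Fin n) (Fin n) ℝ) (u : Fin n → ℝ) :
    u ⬝ᵥ (Q * M * P) *ᵥ u = (Qᵀ *ᵥ u) ⬝ᵥ M *ᵥ (P *ᵥ u) := by
  rw [← mulVec_mulVec, ← mulVec_mulVec, dotProduct_mulVec, ← mulVec_transpose]

lemma funCalc_quad_mono {X : Matrix (Fin n) (Fin n) ℝ} (hX : X.IsHermitian) (f g : ℝ → ℝ)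
    (hfg : ∀ i, f (hX.eigenvalues i) ≤ g (hX.eigenvalues i)) (w : Fin n → ℝ) :
    w ⬝ᵥ (funCalc hX f) *ᵥ w ≤ w ⬝ᵥ (funCalc hX g) *ᵥ w := by
  rw [funCalc_quad, funCalc_quad]
  exact Finset.sum_le_sum fun i _ => mul_le_mul_of_nonneg_right (hfg i) (sq_nonneg _)

lemma funCalc_transpose {X : Matrix (Fin n) (Fin n) ℝ} (hX : X.IsHermitian) (f : ℝ → ℝ) :
    (funCalc hX f)ᵀ = funCalc hX f := by
  rw [funCalc, star_unitary_real hX, transpose_mul, transpose_mul, transpose_transpose,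
    diagonal_transpose, Matrix.mul_assoc]

/-- smoothing property of the damped preconditioned Richardson smoother
`S = I − τ L⁻¹ A`: `A Sᵛ` is symmetric, `0 ≤ uᵀ A Sᵛ u ≤ (τν)⁻¹ uᵀ L u`, and
`‖S u‖_A ≤ ‖u‖_A`. -/
theorem stmt1 {n : ℕ} (A L : Matrix (Fin n) (Fin n) ℝ)
    (hA : A.PosDef) (hL : L.PosDef)
    (C_I : ℝ) (hCI : 0 < C_I)
    (hinv : ∀ u : Fin n → ℝ, u ⬝ᵥ A *ᵥ u ≤ C_I * (u ⬝ᵥ L *ᵥ u))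
    (τ : ℝ) (hτ0 : 0 < τ) (hτ1 : τ ≤ 1 / C_I)
    (ν : ℕ) (hν : 1 ≤ ν)
    (S : Matrix (Fin n) (Fin n) ℝ) (hS : S = 1 - τ • (L⁻¹ * A)) :
    (A * S ^ ν).IsSymm ∧
    (∀ u : Fin n → ℝ,
        0 ≤ u ⬝ᵥ (A * S ^ ν) *ᵥ u ∧
        u ⬝ᵥ (A * S ^ ν) *ᵥ u ≤ (τ * (ν : ℝ))⁻¹ * (u ⬝ᵥ L *ᵥ u)) ∧
    (∀ u : Fin n → ℝ, matNorm A (S *ᵥ u) ≤ matNorm A u) := by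
  -- square root of L
  open scoped MatrixOrder in set R := CFC.sqrt L with hRdef
  have hRps : R.PosSemidef := by open scoped MatrixOrder in exact (CFC.sqrt_nonneg L).posSemidef
  have hRT : Rᵀ = R := by
    have := hRps.isHermitian
    rwa [IsHermitian, conjTranspose_eq_transpose_of_trivial] at this
  have hAT : Aᵀ = A := by
    have := hA.isHermitian
    rwa [IsHermitian, conjTranspose_eq_transpose_of_trivial] at this
  have hRR : R * R = L := by open scoped MatrixOrder in exact CFC.sqrt_mul_sqrt_self L hL.posSemidef.nonneg
  have hdetR : IsUnit R.det := by
    have h1 : R.det * R.det = L.det := by rw [← det_mul, hRR]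
    have h2 : IsUnit (R.det * R.det) := by rw [h1]; exact isUnit_iff_ne_zero.mpr hL.det_pos.ne'
    exact isUnit_of_mul_isUnit_left h2
  have hRiR : R⁻¹ * R = 1 := nonsing_inv_mul R hdetR
  have hRRi : R * R⁻¹ = 1 := mul_nonsing_inv R hdetR
  have hRiT : (R⁻¹)ᵀ = R⁻¹ := by rw [transpose_nonsing_inv, hRT]
  have hLinv : L⁻¹ = R⁻¹ * R⁻¹ := by rw [← hRR, Matrix.mul_inv_rev]
  -- the symmetrized operator X
  set X := R⁻¹ * A * R⁻¹ with hXdef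
  have hXT : Xᵀ = X := by
    rw [hXdef, transpose_mul, transpose_mul, hRiT, hAT, Matrix.mul_assoc]
  have hXH : X.IsHermitian := by
    rw [IsHermitian, conjTranspose_eq_transpose_of_trivial, hXT]
  -- quadratic form facts
  have hquadX : ∀ v, v ⬝ᵥ X *ᵥ v = (R⁻¹ *ᵥ v) ⬝ᵥ A *ᵥ (R⁻¹ *ᵥ v) := fun v => dot_conj hRiT v
  have hLnorm : ∀ v, (R⁻¹ *ᵥ v) ⬝ᵥ L *ᵥ (R⁻¹ *ᵥ v) = v ⬝ᵥ v := by
    intro v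
    have h1 : R⁻¹ * L * R⁻¹ = 1 := by
      rw [← hRR, ← Matrix.mul_assoc, hRiR, Matrix.one_mul, hRRi]
    rw [← dot_conj hRiT v, h1, one_mulVec]
  have hApsd : ∀ v : Fin n → ℝ, 0 ≤ v ⬝ᵥ A *ᵥ v := by
    intro v
    have := hA.posSemidef.dotProduct_mulVec_nonneg v
    simpa using this
  have hX0 : ∀ v : Fin n → ℝ, 0 * (v ⬝ᵥ v) ≤ v ⬝ᵥ X *ᵥ v := by
    intro v
    rw [zero_mul, hquadX]
    exact hApsd _
  have hCIτ : C_I ≤ τ⁻¹ := by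
    rw [le_inv_comm₀ hCI hτ0] at *
    · exact hτ1.trans_eq (one_div C_I)
  have hX1 : ∀ v : Fin n → ℝ, v ⬝ᵥ X *ᵥ v ≤ τ⁻¹ * (v ⬝ᵥ v) := by
    intro v
    rw [hquadX]
    have hvv : 0 ≤ v ⬝ᵥ v := by
      have : v ⬝ᵥ v = ∑ j, (v j)^2 := by simp [dotProduct, sq]
      rw [this]; positivity
    calc (R⁻¹ *ᵥ v) ⬝ᵥ A *ᵥ (R⁻¹ *ᵥ v) ≤ C_I * ((R⁻¹ *ᵥ v) ⬝ᵥ L *ᵥ (R⁻¹ *ᵥ v)) := hinv _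
      _ = C_I * (v ⬝ᵥ v) := by rw [hLnorm]
      _ ≤ τ⁻¹ * (v ⬝ᵥ v) := mul_le_mul_of_nonneg_right hCIτ hvv
  have hμ := eigenvalues_bound hXH 0 τ⁻¹ hX0 hX1
  have hμ0 : ∀ i, 0 ≤ hXH.eigenvalues i := fun i => (hμ i).1
  have hμ1 : ∀ i, τ * hXH.eigenvalues i ≤ 1 := by
    intro i
    calc τ * hXH.eigenvalues i ≤ τ * τ⁻¹ := mul_le_mul_of_nonneg_left (hμ i).2 hτ0.le
      _ = 1 := mul_inv_cancel₀ hτ0.ne'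
  -- matrix identities
  have hSconj : S = R⁻¹ * (1 - τ • X) * R := by
    rw [hS, hLinv, hXdef]
    rw [Matrix.mul_sub, Matrix.sub_mul, Matrix.mul_one, Matrix.mul_smul, Matrix.smul_mul, hRiR]
    congr 1
    simp only [Matrix.mul_assoc, hRiR, Matrix.mul_one]
  have hSpow : S ^ ν = R⁻¹ * (1 - τ • X) ^ ν * R := by rw [hSconj]; exact conjPowAux hRRi ν
  have hAX : A = R * X * R := by
    rw [hXdef]
    simp only [Matrix.mul_assoc, hRiR, Matrix.mul_one]
    rw [← Matrix.mul_assoc, hRRi, Matrix.one_mul]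
  have hASν : A * S ^ ν = R * (X * (1 - τ • X) ^ ν) * R := by
    rw [hSpow]
    conv_lhs => rw [hAX]
    simp only [Matrix.mul_assoc]
    rw [← Matrix.mul_assoc R R⁻¹, hRRi, Matrix.one_mul]
  -- functional calculus forms
  have hXfc : X = funCalc hXH (fun x => x) := (funCalc_id hXH).symm
  have h1τ : (1 : Matrix (Fin n) (Fin n) ℝ) - τ • X = funCalc hXH (fun x => 1 - τ * x) := by
    rw [funCalc_sub hXH (fun _ => 1) (fun x => τ * x), funCalc_one,
      funCalc_smul hXH τ (fun x => x), funCalc_id]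
  have hpol : X * (1 - τ • X) ^ ν = funCalc hXH (fun x => x * (1 - τ * x) ^ ν) := by
    rw [funCalc_mul hXH (fun x => x) (fun x => (1 - τ * x) ^ ν),
      funCalc_pow hXH (fun x => 1 - τ * x) ν, ← h1τ, ← hXfc]
  refine ⟨?_, ?_, ?_⟩
  · -- symmetry
    rw [Matrix.IsSymm, hASν, hpol, transpose_mul, transpose_mul, hRT, funCalc_transpose,
      Matrix.mul_assoc]
  · -- smoothing bounds
    intro u
    set w := R *ᵥ u with hw
    have hwL : w ⬝ᵥ w = u ⬝ᵥ L *ᵥ u := by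
      have h1 : R * 1 * R = L := by rw [Matrix.mul_one, hRR]
      rw [← h1, dot_conj hRT u, one_mulVec]
    have hquad : u ⬝ᵥ (A * S ^ ν) *ᵥ u = w ⬝ᵥ (funCalc hXH (fun x => x * (1 - τ * x) ^ ν)) *ᵥ w := by
      rw [hASν, hpol, dot_conj hRT u]
    have hf : ∀ i, 0 ≤ (fun x => x * (1 - τ * x) ^ ν) (hXH.eigenvalues i) ∧
        (fun x => x * (1 - τ * x) ^ ν) (hXH.eigenvalues i) ≤ (τ * (ν : ℝ))⁻¹ := by
      intro i
      have h1 : 0 ≤ 1 - τ * hXH.eigenvalues i := by linarith [hμ1 i]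
      exact ⟨mul_nonneg (hμ0 i) (pow_nonneg h1 ν),
        key_scalar τ (hXH.eigenvalues i) hτ0 ν hν (hμ0 i) (hμ1 i)⟩
    have hb := funCalc_quad_bounds hXH (fun x => x * (1 - τ * x) ^ ν) 0 ((τ * (ν : ℝ))⁻¹) hf w
    constructor
    · rw [hquad]; linarith [hb.1, hb.2]
    · rw [hquad, ← hwL]; exact hb.2
  · -- energy norm contraction
    intro u
    set w := R *ᵥ u with hw
    have hST : Sᵀ = R * (1 - τ • X) * R⁻¹ := by
      rw [hSconj, transpose_mul, transpose_mul, hRT, hRiT, transpose_sub, transpose_one,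
        transpose_smul, hXT, Matrix.mul_assoc]
    have hSAS : Sᵀ * A * S = R * ((fun M => (1 - τ • X) * (X * (1 - τ • X))) 0) * R := by
      simp only []
      rw [hST, hSconj]
      conv_lhs => rw [hAX]
      simp only [Matrix.mul_assoc]
      rw [← Matrix.mul_assoc R⁻¹ R, hRiR, Matrix.one_mul,
        ← Matrix.mul_assoc R R⁻¹, hRRi, Matrix.one_mul]
    have hpol2 : (1 - τ • X) * (X * (1 - τ • X))
        = funCalc hXH (fun x => (1 - τ * x) * (x * (1 - τ * x))) := by
      rw [funCalc_mul hXH (fun x => 1 - τ * x) (fun x => x * (1 - τ * x)),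
        funCalc_mul hXH (fun x => x) (fun x => 1 - τ * x), ← h1τ, ← hXfc]
    have hform : (S *ᵥ u) ⬝ᵥ A *ᵥ (S *ᵥ u)
        = w ⬝ᵥ (funCalc hXH (fun x => (1 - τ * x) * (x * (1 - τ * x)))) *ᵥ w := by
      have h1 : u ⬝ᵥ (Sᵀ * A * S) *ᵥ u = (S *ᵥ u) ⬝ᵥ A *ᵥ (S *ᵥ u) := by
        rw [dot_conj' Sᵀ A S u, transpose_transpose]
      rw [← h1, hSAS, hpol2, dot_conj hRT u]
    have hformA : u ⬝ᵥ A *ᵥ u = w ⬝ᵥ (funCalc hXH (fun x => x)) *ᵥ w := by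
      conv_lhs => rw [hAX]
      rw [dot_conj hRT u, ← hXfc]
    have hmono : w ⬝ᵥ (funCalc hXH (fun x => (1 - τ * x) * (x * (1 - τ * x)))) *ᵥ w
        ≤ w ⬝ᵥ (funCalc hXH (fun x => x)) *ᵥ w := by
      apply funCalc_quad_mono
      intro i
      set μ := hXH.eigenvalues i
      have h1 : 0 ≤ 1 - τ * μ := by linarith [hμ1 i]
      have h2 : 1 - τ * μ ≤ 1 := by nlinarith [mul_nonneg hτ0.le (hμ0 i)]
      have : (1 - τ * μ) * (μ * (1 - τ * μ)) = μ * (1 - τ * μ)^2 := by ring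
      rw [this]
      have h3 : (1 - τ * μ)^2 ≤ 1 := by nlinarith
      calc μ * (1 - τ * μ)^2 ≤ μ * 1 := mul_le_mul_of_nonneg_left h3 (hμ0 i)
        _ = μ := mul_one μ
    unfold matNorm
    apply Real.sqrt_le_sqrt
    rw [hform, hformA]
    exact hmono
end

section
/- Let A and L be SPD n×n matrices, let P be an n×m matrix with full column rank, set A_c := PᵀAP and T := P·A_c⁻¹·Pᵀ·A. Assume there are constants C_I, C_A > 0 such that uᵀ·A·u ≤ C_I·uᵀ·L·u and ((I−T)u)ᵀ·L·((I−T)u) ≤ C_A·uᵀ·A·u for all u ∈ ℝⁿ. Let τ ∈ (0, 1/C_I], let ν ≥ 1 be an integer, and set S := I − τ·L⁻¹·A. Then the two-grid iteration matrix satisfies ‖(I−T)·Sᵛ·u‖_L ≤ (C_A/(τ·ν))·‖u‖_L for all u ∈ ℝⁿ; in particular, for ν > C_A/τ the two-grid method converges q-linearly in ‖·‖_L with rate q = C_A/(τ·ν) < 1. -/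
open Matrix

private lemma dot_self_nonneg {k : ℕ} (x : Fin k → ℝ) : 0 ≤ x ⬝ᵥ x := by
  simpa [dotProduct, ← sq] using
    Finset.sum_nonneg (fun i _ => sq_nonneg (x i))

private lemma dmv {k l : ℕ} (M : Matrix (Fin k) (Fin l) ℝ) (x : Fin l → ℝ) (y : Fin k → ℝ) :
    (M *ᵥ x) ⬝ᵥ y = x ⬝ᵥ (Mᵀ *ᵥ y) := by
  rw [show x ⬝ᵥ (Mᵀ *ᵥ y) = (x ᵥ* Mᵀ) ⬝ᵥ y from Matrix.dotProduct_mulVec x Mᵀ y,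
    Matrix.vecMul_transpose]

private lemma dot_cs {k : ℕ} (x y : Fin k → ℝ) :
    x ⬝ᵥ y ≤ Real.sqrt (x ⬝ᵥ x) * Real.sqrt (y ⬝ᵥ y) := by
  have h := Finset.sum_mul_sq_le_sq_mul_sq Finset.univ x y
  have hx : x ⬝ᵥ x = ∑ i, x i ^ 2 := by simp [dotProduct, sq]
  have hy : y ⬝ᵥ y = ∑ i, y i ^ 2 := by simp [dotProduct, sq]
  calc x ⬝ᵥ y ≤ Real.sqrt ((x ⬝ᵥ y) ^ 2) := by
        rw [Real.sqrt_sq_eq_abs]; exact le_abs_self _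
    _ ≤ Real.sqrt ((∑ i, x i ^ 2) * (∑ i, y i ^ 2)) := Real.sqrt_le_sqrt (by simpa [dotProduct] using h)
    _ = Real.sqrt (x ⬝ᵥ x) * Real.sqrt (y ⬝ᵥ y) := by
        rw [hx, hy, Real.sqrt_mul (Finset.sum_nonneg fun i _ => sq_nonneg _)]

private lemma scalar_bound {ν : ℕ} (hν : 1 ≤ ν) {x : ℝ} (h0 : 0 ≤ x) (h1 : x ≤ 1) :
    x * (1 - x) ^ ν ≤ 1 / ν := by
  have hν' : (0:ℝ) < ν := by exact_mod_cast Nat.lt_of_lt_of_le Nat.zero_lt_one hν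
  rcases eq_or_lt_of_le h0 with h | h
  · rw [← h]; simp [hν'.le]
  · have hx1 : (0:ℝ) ≤ 1 - x := by linarith
    have e1 : (1 - x) ^ ν ≤ Real.exp (-x) ^ ν :=
      pow_le_pow_left₀ hx1 (by have := Real.add_one_le_exp (-x); linarith) ν
    have e2 : Real.exp (-x) ^ ν = Real.exp (-((ν:ℝ) * x)) := by
      rw [← Real.exp_nat_mul]; ring_nf
    have h5 : 0 < (ν:ℝ) * x := by positivity
    have e3 : Real.exp (-((ν:ℝ) * x)) ≤ 1 / ((ν:ℝ) * x) := by
      rw [Real.exp_neg, inv_eq_one_div]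
      refine one_div_le_one_div_of_le h5 ?_
      have := Real.add_one_le_exp ((ν:ℝ) * x); linarith
    calc x * (1 - x) ^ ν ≤ x * (1 / ((ν:ℝ) * x)) := by
          refine mul_le_mul_of_nonneg_left ?_ h0
          exact e1.trans (e2 ▸ e3)
      _ = 1 / ν := by field_simp

private lemma spec_bound {k : ℕ} {N : Matrix (Fin k) (Fin k) ℝ} (hN : N.PosSemidef)
    (h1 : (1 - N).PosSemidef) (ν : ℕ) (hμ : ∀ i, |(1 - hN.1.eigenvalues i) ^ ν * hN.1.eigenvalues i| ≤ 1 / ν)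
    (hνpos : (0:ℝ) < ν) (z : Fin k → ℝ) :
    Real.sqrt ((((1 - N) ^ ν * N) *ᵥ z) ⬝ᵥ (((1 - N) ^ ν * N) *ᵥ z))
      ≤ (1 / ν) * Real.sqrt (z ⬝ᵥ z) := by
  classical
  have hH := hN.1
  set U : Matrix (Fin k) (Fin k) ℝ := (hH.eigenvectorUnitary : Matrix (Fin k) (Fin k) ℝ) with hUdef
  have hU2 : U * star U = 1 := (Matrix.mem_unitaryGroup_iff).mp hH.eigenvectorUnitary.2
  have hU1 : star U * U = 1 := (Matrix.mem_unitaryGroup_iff').mp hH.eigenvectorUnitary.2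
  set lam := hH.eigenvalues with hlamdef
  have hspec : N = U * Matrix.diagonal lam * star U := by
    have := hH.spectral_theorem
    simpa [Function.comp] using this
  have conj_mul : ∀ a b : Fin k → ℝ,
      (U * Matrix.diagonal a * star U) * (U * Matrix.diagonal b * star U)
        = U * Matrix.diagonal (a * b) * star U := by
    intro a b
    calc (U * Matrix.diagonal a * star U) * (U * Matrix.diagonal b * star U)
        = U * Matrix.diagonal a * (star U * U) * Matrix.diagonal b * star U := by
          simp only [Matrix.mul_assoc]
      _ = U * (Matrix.diagonal a * Matrix.diagonal b) * star U := by
          rw [hU1]; simp only [Matrix.mul_one, Matrix.mul_assoc]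
      _ = U * Matrix.diagonal (a * b) * star U := by rw [Matrix.diagonal_mul_diagonal]; rfl
  have conj_one : U * Matrix.diagonal (1 : Fin k → ℝ) * star U = 1 := by
    rw [show Matrix.diagonal (1 : Fin k → ℝ) = 1 from Matrix.diagonal_one, Matrix.mul_one, hU2]
  have conj_sub : ∀ a b : Fin k → ℝ,
      U * Matrix.diagonal a * star U - U * Matrix.diagonal b * star U
        = U * Matrix.diagonal (a - b) * star U := by
    intro a b
    rw [show (a - b : Fin k → ℝ) = fun i => a i - b i from rfl, ← Matrix.diagonal_sub, Matrix.mul_sub, Matrix.sub_mul]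
  have conj_pow : ∀ (a : Fin k → ℝ) (j : ℕ),
      (U * Matrix.diagonal a * star U) ^ j = U * Matrix.diagonal (a ^ j) * star U := by
    intro a j
    induction j with
    | zero => simp only [pow_zero]; exact conj_one.symm
    | succ j ih => rw [pow_succ, ih, conj_mul, ← pow_succ]
  set μ : Fin k → ℝ := ((1 : Fin k → ℝ) - lam) ^ ν * lam with hμdef
  set M : Matrix (Fin k) (Fin k) ℝ := (1 - N) ^ ν * N with hMdef
  have hM : M = U * Matrix.diagonal μ * star U := by
    rw [hMdef, hspec, show (1 : Matrix (Fin k) (Fin k) ℝ) - U * Matrix.diagonal lam * star U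
        = U * Matrix.diagonal ((1 : Fin k → ℝ) - lam) * star U from by
        rw [← conj_sub, conj_one], conj_pow, conj_mul]
  have hMT : Mᵀ = M := by
    rw [← Matrix.conjTranspose_eq_transpose_of_trivial, hM]
    simp [Matrix.star_eq_conjTranspose, Matrix.conjTranspose_mul,
      Matrix.diagonal_conjTranspose, Matrix.mul_assoc]
  set c : Fin k → ℝ := fun _ => (1/(ν:ℝ))^2 with hcdef
  have hMM : M * M = U * Matrix.diagonal (μ * μ) * star U := by rw [hM, conj_mul]
  have hDentry : ∀ i, 0 ≤ (c - μ * μ) i := by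
    intro i
    have h2 : (μ i)^2 ≤ (1/(ν:ℝ))^2 := by
      rw [← sq_abs]
      apply pow_le_pow_left₀ (abs_nonneg _) (hμ i)
    have : (c - μ * μ) i = (1/(ν:ℝ))^2 - μ i * μ i := rfl
    rw [this]
    nlinarith [h2]
  have hid : U * Matrix.diagonal c * star U
      = (1/(ν:ℝ))^2 • (1 : Matrix (Fin k) (Fin k) ℝ) := by
    rw [← Matrix.smul_one_eq_diagonal]
    simp [Matrix.mul_smul, Matrix.smul_mul, hU2]
  have hDpsd : ((1/(ν:ℝ))^2 • (1 : Matrix (Fin k) (Fin k) ℝ) - M * M).PosSemidef := by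
    rw [← hid, hMM, conj_sub]
    have := (Matrix.posSemidef_diagonal_iff.mpr hDentry).mul_mul_conjTranspose_same U
    rwa [← Matrix.star_eq_conjTranspose] at this
  have key : (M *ᵥ z) ⬝ᵥ (M *ᵥ z) ≤ (1/(ν:ℝ))^2 * (z ⬝ᵥ z) := by
    have h0 := hDpsd.dotProduct_mulVec_nonneg z
    rw [star_trivial, Matrix.sub_mulVec, dotProduct_sub, Matrix.smul_mulVec,
      Matrix.one_mulVec, dotProduct_smul] at h0
    have hz : (M *ᵥ z) ⬝ᵥ (M *ᵥ z) = z ⬝ᵥ ((M * M) *ᵥ z) := by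
      rw [dmv, hMT, Matrix.mulVec_mulVec]
    rw [hz]
    simpa using h0
  calc Real.sqrt ((M *ᵥ z) ⬝ᵥ (M *ᵥ z)) ≤ Real.sqrt ((1/(ν:ℝ))^2 * (z ⬝ᵥ z)) :=
        Real.sqrt_le_sqrt key
    _ = (1/(ν:ℝ)) * Real.sqrt (z ⬝ᵥ z) := by
        rw [Real.sqrt_mul (sq_nonneg _), Real.sqrt_sq (by positivity)]

private lemma eigen_le_one {k : ℕ} {N : Matrix (Fin k) (Fin k) ℝ} (hN : N.IsHermitian)
    (h1 : (1 - N).PosSemidef) (i : Fin k) : hN.eigenvalues i ≤ 1 := by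
  classical
  set b := hN.eigenvectorBasis with hbdef
  have hb := hN.mulVec_eigenvectorBasis i
  have hnorm : ‖b i‖ = 1 := (b.orthonormal).1 i
  have hinner : (⇑(b i) : Fin k → ℝ) ⬝ᵥ ⇑(b i) = 1 := by
    have h2 : (inner ℝ (b i) (b i) : ℝ) = 1 := by
      rw [real_inner_self_eq_norm_mul_norm, hnorm, one_mul]
    rw [← h2, PiLp.inner_apply]; simp only [dotProduct]
    exact Finset.sum_congr rfl (fun j _ => by simp [RCLike.inner_apply, sq])
  have h0' := h1.dotProduct_mulVec_nonneg (⇑(b i))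
  rw [star_trivial, Matrix.sub_mulVec, Matrix.one_mulVec, hb, dotProduct_sub,
    dotProduct_smul, hinner] at h0'
  simp only [smul_eq_mul, mul_one] at h0'
  linarith


/-- two-grid convergence. Under the inverse inequality (constant `C_I`)
and the approximation property (constant `C_A`), with `τ ∈ (0, 1/C_I]`, `ν ≥ 1` and
`S = I − τ L⁻¹ A`, the two-grid iteration matrix `(I−T) Sᵛ` satisfies
`‖(I−T) Sᵛ u‖_L ≤ (C_A/(τν)) ‖u‖_L`; in particular for `ν > C_A/τ` the rate
`q = C_A/(τν)` satisfies `q < 1`. -/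
theorem stmt2 {n m : ℕ} (A L : Matrix (Fin n) (Fin n) ℝ)
    (hA : A.PosDef) (hL : L.PosDef)
    (P : Matrix (Fin n) (Fin m) ℝ) (hP : P.rank = m)
    (T : Matrix (Fin n) (Fin n) ℝ) (hT : T = P * (Pᵀ * A * P)⁻¹ * (Pᵀ * A))
    (C_I C_A : ℝ) (hCI : 0 < C_I) (hCA : 0 < C_A)
    (hinv : ∀ u : Fin n → ℝ, u ⬝ᵥ A *ᵥ u ≤ C_I * (u ⬝ᵥ L *ᵥ u))
    (happrox : ∀ u : Fin n → ℝ,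
        ((1 - T) *ᵥ u) ⬝ᵥ L *ᵥ ((1 - T) *ᵥ u) ≤ C_A * (u ⬝ᵥ A *ᵥ u))
    (τ : ℝ) (hτ0 : 0 < τ) (hτ1 : τ ≤ 1 / C_I)
    (ν : ℕ) (hν : 1 ≤ ν)
    (S : Matrix (Fin n) (Fin n) ℝ) (hS : S = 1 - τ • (L⁻¹ * A)) :
    (∀ u : Fin n → ℝ,
        matNorm L (((1 - T) * S ^ ν) *ᵥ u) ≤ (C_A / (τ * (ν : ℝ))) * matNorm L u) ∧
    (C_A / τ < (ν : ℝ) → C_A / (τ * (ν : ℝ)) < 1) := by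
  have hν' : (0:ℝ) < (ν:ℝ) := by
    have : 0 < ν := hν
    exact_mod_cast this
  have hτν : 0 < τ * (ν:ℝ) := mul_pos hτ0 hν'
  constructor
  · -- main estimate
    classical
    -- square root of L
    have hLpsd := hL.posSemidef
    obtain ⟨X, hXX, hXT⟩ : ∃ X : Matrix (Fin n) (Fin n) ℝ, X * X = L ∧ Xᵀ = X := by
      open scoped MatrixOrder in
      refine ⟨CFC.sqrt L, CFC.sqrt_mul_sqrt_self L hLpsd.nonneg, ?_⟩
      rw [← Matrix.conjTranspose_eq_transpose_of_trivial]
      open scoped MatrixOrder in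
      exact (CFC.sqrt_nonneg L).posSemidef.1
    have hXdet : IsUnit X.det := by
      have hdet : 0 < L.det := hL.det_pos
      rw [← hXX, Matrix.det_mul] at hdet
      exact isUnit_iff_ne_zero.mpr (fun h => by rw [h, mul_zero] at hdet; exact lt_irrefl _ hdet)
    have hXiX : X⁻¹ * X = 1 := Matrix.nonsing_inv_mul X hXdet
    have hXXi : X * X⁻¹ = 1 := Matrix.mul_nonsing_inv X hXdet
    have hXiT : (X⁻¹)ᵀ = X⁻¹ := by rw [Matrix.transpose_nonsing_inv, hXT]
    have hLinv : L⁻¹ = X⁻¹ * X⁻¹ := by rw [← hXX, Matrix.mul_inv_rev]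
    have hAT : Aᵀ = A := by
      rw [← Matrix.conjTranspose_eq_transpose_of_trivial]; exact hA.1
    -- dot product moving helpers
    have hdot : ∀ (v w : Fin n → ℝ), v ⬝ᵥ (X⁻¹ *ᵥ w) = (X⁻¹ *ᵥ v) ⬝ᵥ w := by
      intro v w; rw [dmv, hXiT]
    have hLq : ∀ v : Fin n → ℝ, v ⬝ᵥ (L *ᵥ v) = (X *ᵥ v) ⬝ᵥ (X *ᵥ v) := by
      intro v
      rw [dmv, hXT, Matrix.mulVec_mulVec, hXX]
    -- coarse matrix
    obtain ⟨Ac, hAcdef⟩ : ∃ B : Matrix (Fin m) (Fin m) ℝ, B = Pᵀ * A * P := ⟨_, rfl⟩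
    have hinj : ∀ x : Fin m → ℝ, P *ᵥ x = 0 → x = 0 := by
      have hker : LinearMap.ker P.mulVecLin = ⊥ := by
        have hrn := LinearMap.finrank_range_add_finrank_ker P.mulVecLin
        rw [Matrix.rank] at hP
        rw [hP] at hrn
        have hdom : Module.finrank ℝ (Fin m → ℝ) = m := by simp
        rw [hdom] at hrn
        have hzero : Module.finrank ℝ (LinearMap.ker P.mulVecLin) = 0 := by omega
        exact Submodule.finrank_eq_zero.mp hzero
      intro x hx
      exact (LinearMap.ker_eq_bot.mp hker) (by simpa using hx)
    have hAcPD : Ac.PosDef := by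
      refine Matrix.PosDef.of_dotProduct_mulVec_pos ?_ ?_
      · show Acᴴ = Ac
        rw [Matrix.conjTranspose_eq_transpose_of_trivial, hAcdef, Matrix.transpose_mul,
          Matrix.transpose_mul, Matrix.transpose_transpose, hAT, Matrix.mul_assoc]
      · intro x hx
        have hPx : P *ᵥ x ≠ 0 := fun h => hx (hinj x h)
        have hpos := hA.dotProduct_mulVec_pos hPx
        rw [star_trivial] at hpos
        rw [star_trivial, hAcdef, ← Matrix.mulVec_mulVec, ← Matrix.mulVec_mulVec,
          (dmv P x (A *ᵥ (P *ᵥ x))).symm]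
        exact hpos
    have hAcdet : IsUnit Ac.det := isUnit_iff_ne_zero.mpr hAcPD.det_pos.ne'
    have hAcT : Acᵀ = Ac := by
      rw [← Matrix.conjTranspose_eq_transpose_of_trivial]; exact hAcPD.1
    -- projector facts
    obtain ⟨Q, hQdef⟩ : ∃ Q' : Matrix (Fin n) (Fin n) ℝ,
        Q' = (1 : Matrix (Fin n) (Fin n) ℝ) - T := ⟨_, rfl⟩
    have hT' : T = P * Ac⁻¹ * (Pᵀ * A) := by rw [hT, ← hAcdef]
    have hcancel : (Pᵀ * A) * (P * Ac⁻¹) = 1 := by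
      rw [← Matrix.mul_assoc, ← hAcdef]
      exact Matrix.mul_nonsing_inv _ hAcdet
    have hTT : T * T = T := by
      rw [hT']
      calc P * Ac⁻¹ * (Pᵀ * A) * (P * Ac⁻¹ * (Pᵀ * A))
          = P * Ac⁻¹ * ((Pᵀ * A) * (P * Ac⁻¹) * (Pᵀ * A)) := by simp only [Matrix.mul_assoc]
        _ = P * Ac⁻¹ * (Pᵀ * A) := by rw [hcancel, Matrix.one_mul]
    have hQQ : Q * Q = Q := by
      have hexp : Q * Q = 1 - T - T + T * T := by rw [hQdef]; noncomm_ring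
      rw [hexp, hTT, hQdef]; abel
    have hTt : Tᵀ = A * (P * (Ac⁻¹ * Pᵀ)) := by
      rw [hT']
      simp only [Matrix.transpose_mul, Matrix.transpose_transpose,
        Matrix.transpose_nonsing_inv, hAcT, hAT, Matrix.mul_assoc]
    have hQA : Qᵀ * A = A * Q := by
      rw [hQdef, Matrix.transpose_sub, Matrix.transpose_one, Matrix.sub_mul, Matrix.mul_sub,
        one_mul, mul_one, hTt]
      congr 1
      rw [hT']
      simp only [Matrix.mul_assoc]
    -- symmetric smoother matrix
    obtain ⟨N, hNdef⟩ : ∃ N' : Matrix (Fin n) (Fin n) ℝ,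
        N' = τ • (X⁻¹ * A * X⁻¹) := ⟨_, rfl⟩
    obtain ⟨Qt, hQtdef⟩ : ∃ Q' : Matrix (Fin n) (Fin n) ℝ, Q' = X * Q * X⁻¹ := ⟨_, rfl⟩
    have hNT : Nᵀ = N := by
      rw [hNdef, Matrix.transpose_smul]
      congr 1
      simp only [Matrix.transpose_mul, hXiT, hAT, Matrix.mul_assoc]
    have hNH : N.IsHermitian := by
      show Nᴴ = N
      rw [Matrix.conjTranspose_eq_transpose_of_trivial, hNT]
    have hNquad : ∀ x : Fin n → ℝ,
        x ⬝ᵥ (N *ᵥ x) = τ * ((X⁻¹ *ᵥ x) ⬝ᵥ (A *ᵥ (X⁻¹ *ᵥ x))) := by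
      intro x
      rw [hNdef, Matrix.smul_mulVec, dotProduct_smul, smul_eq_mul,
        ← Matrix.mulVec_mulVec, ← Matrix.mulVec_mulVec, hdot]
    have hNpsd : N.PosSemidef := by
      refine Matrix.PosSemidef.of_dotProduct_mulVec_nonneg hNH (fun x => ?_)
      rw [star_trivial, hNquad]
      have h5 := hA.posSemidef.dotProduct_mulVec_nonneg (X⁻¹ *ᵥ x)
      rw [star_trivial] at h5
      exact mul_nonneg hτ0.le h5
    have hXiXv : ∀ x : Fin n → ℝ, X *ᵥ (X⁻¹ *ᵥ x) = x := by
      intro x; rw [Matrix.mulVec_mulVec, hXXi, Matrix.one_mulVec]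
    have hLXi : ∀ x : Fin n → ℝ, (X⁻¹ *ᵥ x) ⬝ᵥ (L *ᵥ (X⁻¹ *ᵥ x)) = x ⬝ᵥ x := by
      intro x; rw [hLq, hXiXv]
    have h1Npsd : (1 - N).PosSemidef := by
      refine Matrix.PosSemidef.of_dotProduct_mulVec_nonneg ((Matrix.isHermitian_one).sub hNH) (fun x => ?_)
      rw [star_trivial, Matrix.sub_mulVec, Matrix.one_mulVec, dotProduct_sub, hNquad]
      have h1 := hinv (X⁻¹ *ᵥ x)
      rw [hLXi] at h1
      have h2 : τ * C_I ≤ 1 := (le_div_iff₀ hCI).mp hτ1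
      have h3 : 0 ≤ x ⬝ᵥ x := dot_self_nonneg x
      have h5 : 0 ≤ (X⁻¹ *ᵥ x) ⬝ᵥ (A *ᵥ (X⁻¹ *ᵥ x)) := by
        have h6 := hA.posSemidef.dotProduct_mulVec_nonneg (X⁻¹ *ᵥ x); rwa [star_trivial] at h6
      nlinarith [h1, h2, h3, h5, hτ0.le, hCI.le]
    have happT : ∀ v : Fin n → ℝ,
        (Qt *ᵥ v) ⬝ᵥ (Qt *ᵥ v) ≤ (C_A / τ) * (v ⬝ᵥ (N *ᵥ v)) := by
      intro v
      have hQtv : Qt *ᵥ v = X *ᵥ (Q *ᵥ (X⁻¹ *ᵥ v)) := by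
        rw [hQtdef, ← Matrix.mulVec_mulVec, ← Matrix.mulVec_mulVec]
      have hL1 : (Qt *ᵥ v) ⬝ᵥ (Qt *ᵥ v)
          = (Q *ᵥ (X⁻¹ *ᵥ v)) ⬝ᵥ (L *ᵥ (Q *ᵥ (X⁻¹ *ᵥ v))) := by
        rw [hQtv, ← hLq]
      have happx := happrox (X⁻¹ *ᵥ v)
      rw [← hQdef] at happx
      rw [hL1, hNquad]
      calc (Q *ᵥ (X⁻¹ *ᵥ v)) ⬝ᵥ (L *ᵥ (Q *ᵥ (X⁻¹ *ᵥ v)))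
          ≤ C_A * ((X⁻¹ *ᵥ v) ⬝ᵥ (A *ᵥ (X⁻¹ *ᵥ v))) := happx
        _ = (C_A / τ) * (τ * ((X⁻¹ *ᵥ v) ⬝ᵥ (A *ᵥ (X⁻¹ *ᵥ v)))) := by
            field_simp
    have hQtT : Qtᵀ = X⁻¹ * (Qᵀ * X) := by
      rw [hQtdef]
      simp only [Matrix.transpose_mul, hXT, hXiT, Matrix.mul_assoc]
    have hcomm : Qtᵀ * N = N * Qt := by
      rw [hQtT, hQtdef, hNdef, Matrix.mul_smul, Matrix.smul_mul]
      congr 1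
      calc X⁻¹ * (Qᵀ * X) * (X⁻¹ * A * X⁻¹)
          = X⁻¹ * (Qᵀ * ((X * X⁻¹) * (A * X⁻¹))) := by simp only [Matrix.mul_assoc]
        _ = X⁻¹ * ((Qᵀ * A) * X⁻¹) := by rw [hXXi, Matrix.one_mul, Matrix.mul_assoc]
        _ = X⁻¹ * ((A * Q) * X⁻¹) := by rw [hQA]
        _ = X⁻¹ * A * X⁻¹ * (X * Q * X⁻¹) := by
            simp only [Matrix.mul_assoc]
            rw [show X⁻¹ * (X * (Q * X⁻¹)) = Q * X⁻¹ from by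
              rw [← Matrix.mul_assoc, hXiX, Matrix.one_mul]]
    have hQtQt : Qt * Qt = Qt := by
      rw [hQtdef]
      calc X * Q * X⁻¹ * (X * Q * X⁻¹)
          = X * (Q * ((X⁻¹ * X) * (Q * X⁻¹))) := by simp only [Matrix.mul_assoc]
        _ = X * ((Q * Q) * X⁻¹) := by rw [hXiX, Matrix.one_mul, Matrix.mul_assoc]
        _ = X * Q * X⁻¹ := by rw [hQQ, Matrix.mul_assoc]
    have hXS : X * S = (1 - N) * X := by
      rw [hS, hNdef, hLinv, Matrix.mul_sub, Matrix.sub_mul, mul_one, Matrix.one_mul]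
      congr 1
      rw [Matrix.mul_smul, Matrix.smul_mul]
      congr 1
      calc X * (X⁻¹ * X⁻¹ * A) = (X * X⁻¹) * (X⁻¹ * A) := by simp only [Matrix.mul_assoc]
        _ = X⁻¹ * A := by rw [hXXi, Matrix.one_mul]
        _ = X⁻¹ * A * (X⁻¹ * X) := by rw [hXiX, mul_one]
        _ = X⁻¹ * A * X⁻¹ * X := by simp only [Matrix.mul_assoc]
    have hXSn : ∀ j : ℕ, X * S ^ j = (1 - N) ^ j * X := by
      intro j
      induction j with
      | zero => simp
      | succ j ih =>
        rw [pow_succ, ← Matrix.mul_assoc, ih, Matrix.mul_assoc, hXS, ← Matrix.mul_assoc,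
          ← pow_succ]
    have hconj : X * (Q * S ^ ν) = (Qt * (1 - N) ^ ν) * X := by
      calc X * (Q * S ^ ν) = (X * Q * X⁻¹) * (X * S ^ ν) := by
            simp only [Matrix.mul_assoc]
            rw [show X⁻¹ * (X * (S ^ ν)) = S ^ ν from by rw [← Matrix.mul_assoc, hXiX,
              Matrix.one_mul]]
        _ = (X * Q * X⁻¹) * ((1 - N) ^ ν * X) := by rw [hXSn ν]
        _ = (Qt * (1 - N) ^ ν) * X := by rw [hQtdef]; simp only [Matrix.mul_assoc]
    intro u
    rw [← hQdef]
    obtain ⟨ut, hutdef⟩ : ∃ v : Fin n → ℝ, v = X *ᵥ u := ⟨_, rfl⟩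
    obtain ⟨w, hwdef⟩ : ∃ v : Fin n → ℝ, v = (Qt * (1 - N) ^ ν) *ᵥ ut := ⟨_, rfl⟩
    have hw : X *ᵥ ((Q * S ^ ν) *ᵥ u) = w := by
      rw [Matrix.mulVec_mulVec, hconj, ← Matrix.mulVec_mulVec, ← hutdef, ← hwdef]
    have hnorm1 : matNorm L ((Q * S ^ ν) *ᵥ u) = Real.sqrt (w ⬝ᵥ w) := by
      unfold matNorm
      rw [hLq, hw]
    have hnorm2 : matNorm L u = Real.sqrt (ut ⬝ᵥ ut) := by
      unfold matNorm
      rw [hLq, ← hutdef]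
    have s1 : Qt *ᵥ w = w := by
      rw [hwdef, Matrix.mulVec_mulVec, ← Matrix.mul_assoc, hQtQt]
    have hy : w = Qt *ᵥ ((1 - N) ^ ν *ᵥ ut) := by
      rw [hwdef, Matrix.mulVec_mulVec]
    have s2 : w ⬝ᵥ w ≤ (C_A / τ) * (w ⬝ᵥ (N *ᵥ w)) := by
      have h := happT w
      rwa [s1] at h
    have hpowT : ((1 - N) ^ ν)ᵀ = (1 - N) ^ ν := by
      rw [Matrix.transpose_pow, Matrix.transpose_sub, Matrix.transpose_one, hNT]
    have s3 : w ⬝ᵥ (N *ᵥ w) = (((1 - N) ^ ν * N) *ᵥ w) ⬝ᵥ ut := by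
      calc w ⬝ᵥ (N *ᵥ w) = (N *ᵥ w) ⬝ᵥ w := dotProduct_comm _ _
        _ = (N *ᵥ w) ⬝ᵥ (Qt *ᵥ ((1 - N) ^ ν *ᵥ ut)) := by rw [← hy]
        _ = (Qtᵀ *ᵥ (N *ᵥ w)) ⬝ᵥ ((1 - N) ^ ν *ᵥ ut) := by
            rw [dmv Qtᵀ, Matrix.transpose_transpose]
        _ = ((N * Qt) *ᵥ w) ⬝ᵥ ((1 - N) ^ ν *ᵥ ut) := by
            rw [Matrix.mulVec_mulVec, hcomm]
        _ = (N *ᵥ w) ⬝ᵥ ((1 - N) ^ ν *ᵥ ut) := by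
            rw [← Matrix.mulVec_mulVec, s1]
        _ = (((1 - N) ^ ν)ᵀ *ᵥ (N *ᵥ w)) ⬝ᵥ ut := by
            rw [dmv (((1 - N) ^ ν)ᵀ), Matrix.transpose_transpose]
        _ = (((1 - N) ^ ν * N) *ᵥ w) ⬝ᵥ ut := by rw [hpowT, Matrix.mulVec_mulVec]
    have hev : ∀ i, |(1 - hNpsd.1.eigenvalues i) ^ ν * hNpsd.1.eigenvalues i| ≤ 1 / ν := by
      intro i
      have e0 := hNpsd.eigenvalues_nonneg i
      have e1 := eigen_le_one hNpsd.1 h1Npsd i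
      rw [abs_of_nonneg (mul_nonneg (pow_nonneg (by linarith) ν) e0), mul_comm]
      exact scalar_bound hν e0 e1
    have s5 := spec_bound hNpsd h1Npsd ν hev hν' w
    have s4 := dot_cs (((1 - N) ^ ν * N) *ᵥ w) ut
    rw [hnorm1, hnorm2]
    obtain ⟨a, hadef⟩ : ∃ r : ℝ, r = Real.sqrt (w ⬝ᵥ w) := ⟨_, rfl⟩
    obtain ⟨bb, hbdef⟩ : ∃ r : ℝ, r = Real.sqrt (ut ⬝ᵥ ut) := ⟨_, rfl⟩
    rw [← hadef, ← hbdef]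
    rw [← hadef] at s5
    rw [← hbdef] at s4
    have ha0 : 0 ≤ a := hadef ▸ Real.sqrt_nonneg _
    have hb0 : 0 ≤ bb := hbdef ▸ Real.sqrt_nonneg _
    have ha2 : a ^ 2 = w ⬝ᵥ w := by rw [hadef]; exact Real.sq_sqrt (dot_self_nonneg w)
    have hCT : 0 ≤ C_A / τ := le_of_lt (div_pos hCA hτ0)
    have hmain : a ^ 2 ≤ (C_A / (τ * ν)) * a * bb := by
      have c1 : w ⬝ᵥ w ≤ (C_A / τ) * ((((1 - N) ^ ν * N) *ᵥ w) ⬝ᵥ ut) := by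
        rw [← s3]; exact s2
      have c2 : (((1 - N) ^ ν * N) *ᵥ w) ⬝ᵥ ut ≤ (1 / ν * a) * bb := by
        calc (((1 - N) ^ ν * N) *ᵥ w) ⬝ᵥ ut
            ≤ Real.sqrt ((((1 - N) ^ ν * N) *ᵥ w) ⬝ᵥ (((1 - N) ^ ν * N) *ᵥ w)) * bb := s4
          _ ≤ (1 / ν * a) * bb := mul_le_mul_of_nonneg_right s5 hb0
      have c3 := mul_le_mul_of_nonneg_left c2 hCT
      rw [ha2]
      calc w ⬝ᵥ w ≤ (C_A / τ) * ((((1 - N) ^ ν * N) *ᵥ w) ⬝ᵥ ut) := c1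
        _ ≤ (C_A / τ) * ((1 / ν * a) * bb) := c3
        _ = (C_A / (τ * ν)) * a * bb := by field_simp
    rcases eq_or_lt_of_le ha0 with hz | hz
    · rw [← hz]
      exact mul_nonneg (le_of_lt (div_pos hCA hτν)) hb0
    · have h2 : a * a ≤ ((C_A / (τ * ν)) * bb) * a := by
        calc a * a = a ^ 2 := by ring
          _ ≤ (C_A / (τ * ν)) * a * bb := hmain
          _ = ((C_A / (τ * ν)) * bb) * a := by ring
      exact le_of_mul_le_mul_right h2 hz
  · intro h
    rw [div_lt_one hτν]
    have h2 := (div_lt_iff₀ hτ0).mp h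
    linarith
end

section
/- Let N ≥ 0 be an integer and for each ℓ ∈ {0,…,N} let A_ℓ be an SPD n_ℓ×n_ℓ real matrix. For each ℓ ∈ {1,…,N} let P_ℓ be an n_ℓ×n_{ℓ−1} matrix with full column rank such that A_{ℓ−1} = P_ℓᵀ·A_ℓ·P_ℓ, let L_ℓ be an SPD n_ℓ×n_ℓ matrix, and set T_{ℓ−1} := P_ℓ·A_{ℓ−1}⁻¹·P_ℓᵀ·A_ℓ. Assume there are constants C_I, C_A > 0 such that for all ℓ ∈ {1,…,N} and all u ∈ ℝ^{n_ℓ}: uᵀ·A_ℓ·u ≤ C_I·uᵀ·L_ℓ·u and ((I−T_{ℓ−1})u)ᵀ·L_ℓ·((I−T_{ℓ−1})u) ≤ C_A·uᵀ·A_ℓ·u. Fix τ ∈ (0, 1/C_I], set ν₀ := C_A/τ, let ν be an even integer with ν > 4·ν₀, and set S_ℓ := I − τ·L_ℓ⁻¹·A_ℓ. Define the W-cycle iteration matrices recursively by W_0 := 0 and W_ℓ := S_ℓ^{ν/2}·(I − P_ℓ·(I − W_{ℓ−1}²)·A_{ℓ−1}⁻¹·P_ℓᵀ·A_ℓ)·S_ℓ^{ν/2}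 for ℓ ≥ 1. Then for every ℓ ∈ {0,…,N} and every u ∈ ℝ^{n_ℓ}: ‖W_ℓ·u‖_{A_ℓ} ≤ (2·ν₀/ν)·‖u‖_{A_ℓ}, i.e., the W-cycle multigrid method with ν/2 pre- and ν/2 post-smoothing steps converges in the energy norm with rate 2ν₀/ν < 1/2. -/
open Matrix

namespace MGaux

lemma dp_mul {k l : ℕ} (M N : Matrix (Fin k) (Fin l) ℝ) (u v : Fin l → ℝ) :
    (M *ᵥ u) ⬝ᵥ (N *ᵥ v) = u ⬝ᵥ ((Mᵀ * N) *ᵥ v) := by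
  rw [Matrix.dotProduct_mulVec, Matrix.vecMul_mulVec]
  exact (Matrix.dotProduct_mulVec _ _ _).symm

lemma q_cong {p q : ℕ} (M : Matrix (Fin p) (Fin p) ℝ) (C : Matrix (Fin p) (Fin q) ℝ)
    (x : Fin q → ℝ) : (C *ᵥ x) ⬝ᵥ M *ᵥ (C *ᵥ x) = x ⬝ᵥ (Cᵀ * M * C) *ᵥ x := by
  rw [Matrix.mulVec_mulVec, dp_mul, ← Matrix.mul_assoc]

lemma dp_swap {p : ℕ} (M : Matrix (Fin p) (Fin p) ℝ) (x y : Fin p → ℝ) :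
    x ⬝ᵥ M *ᵥ y = y ⬝ᵥ Mᵀ *ᵥ x := by
  have h := dp_mul M 1 y x
  simp only [Matrix.one_mulVec, Matrix.mul_one] at h
  rw [dotProduct_comm, h]

lemma psd_nn {p : ℕ} {M : Matrix (Fin p) (Fin p) ℝ} (h : M.PosSemidef) (x : Fin p → ℝ) :
    0 ≤ x ⬝ᵥ M *ᵥ x := by simpa using h.dotProduct_mulVec_nonneg x

lemma psd_cs {p : ℕ} (M : Matrix (Fin p) (Fin p) ℝ) (hsym : Mᵀ = M)
    (hnn : ∀ x, 0 ≤ x ⬝ᵥ M *ᵥ x) (x y : Fin p → ℝ) :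
    (x ⬝ᵥ M *ᵥ y) ^ 2 ≤ (x ⬝ᵥ M *ᵥ x) * (y ⬝ᵥ M *ᵥ y) := by
  have hyx : y ⬝ᵥ M *ᵥ x = x ⬝ᵥ M *ᵥ y := by rw [dp_swap, hsym]
  have h : ∀ t : ℝ, 0 ≤ (y ⬝ᵥ M *ᵥ y) * (t * t) + (2 * (x ⬝ᵥ M *ᵥ y)) * t + (x ⬝ᵥ M *ᵥ x) := by
    intro t
    have h0 := hnn (x + t • y)
    simp only [Matrix.mulVec_add, Matrix.mulVec_smul, dotProduct_add, add_dotProduct,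
      smul_dotProduct, dotProduct_smul, smul_eq_mul] at h0
    rw [hyx] at h0
    nlinarith [h0]
  have hd := discrim_le_zero h
  unfold discrim at hd
  nlinarith [hd]

lemma matNorm_nonneg {p : ℕ} (M : Matrix (Fin p) (Fin p) ℝ) (x : Fin p → ℝ) :
    0 ≤ matNorm M x := Real.sqrt_nonneg _

lemma matNorm_add {p : ℕ} (M : Matrix (Fin p) (Fin p) ℝ) (hsym : Mᵀ = M)
    (hnn : ∀ x, 0 ≤ x ⬝ᵥ M *ᵥ x) (x y : Fin p → ℝ) :
    matNorm M (x + y) ≤ matNorm M x + matNorm M y := by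
  unfold matNorm
  have hcs := psd_cs M hsym hnn x y
  have hx := hnn x
  have hy := hnn y
  have hxy : x ⬝ᵥ M *ᵥ y ≤ Real.sqrt (x ⬝ᵥ M *ᵥ x) * Real.sqrt (y ⬝ᵥ M *ᵥ y) := by
    calc x ⬝ᵥ M *ᵥ y ≤ Real.sqrt ((x ⬝ᵥ M *ᵥ y) ^ 2) := by
          rw [Real.sqrt_sq_eq_abs]; exact le_abs_self _
      _ ≤ Real.sqrt ((x ⬝ᵥ M *ᵥ x) * (y ⬝ᵥ M *ᵥ y)) := Real.sqrt_le_sqrt hcs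
      _ = Real.sqrt (x ⬝ᵥ M *ᵥ x) * Real.sqrt (y ⬝ᵥ M *ᵥ y) := Real.sqrt_mul hx _
  have hyx : y ⬝ᵥ M *ᵥ x = x ⬝ᵥ M *ᵥ y := by rw [dp_swap, hsym]
  have expand : (x + y) ⬝ᵥ M *ᵥ (x + y)
      = x ⬝ᵥ M *ᵥ x + 2 * (x ⬝ᵥ M *ᵥ y) + y ⬝ᵥ M *ᵥ y := by
    simp only [Matrix.mulVec_add, dotProduct_add, add_dotProduct]
    rw [hyx]; ring
  rw [expand]
  have sx : Real.sqrt (x ⬝ᵥ M *ᵥ x) ^ 2 = x ⬝ᵥ M *ᵥ x := Real.sq_sqrt hx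
  have sy : Real.sqrt (y ⬝ᵥ M *ᵥ y) ^ 2 = y ⬝ᵥ M *ᵥ y := Real.sq_sqrt hy
  have hb : x ⬝ᵥ M *ᵥ x + 2 * (x ⬝ᵥ M *ᵥ y) + y ⬝ᵥ M *ᵥ y
      ≤ (Real.sqrt (x ⬝ᵥ M *ᵥ x) + Real.sqrt (y ⬝ᵥ M *ᵥ y)) ^ 2 := by nlinarith [hxy, sx, sy]
  calc Real.sqrt (x ⬝ᵥ M *ᵥ x + 2 * (x ⬝ᵥ M *ᵥ y) + y ⬝ᵥ M *ᵥ y)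
      ≤ Real.sqrt ((Real.sqrt (x ⬝ᵥ M *ᵥ x) + Real.sqrt (y ⬝ᵥ M *ᵥ y)) ^ 2) :=
        Real.sqrt_le_sqrt hb
    _ = Real.sqrt (x ⬝ᵥ M *ᵥ x) + Real.sqrt (y ⬝ᵥ M *ᵥ y) := Real.sqrt_sq (by positivity)

lemma matNorm_le_of_sq {p : ℕ} (M : Matrix (Fin p) (Fin p) ℝ) (x y : Fin p → ℝ) (c : ℝ)
    (hc : 0 ≤ c) (h : x ⬝ᵥ M *ᵥ x ≤ c ^ 2 * (y ⬝ᵥ M *ᵥ y)) :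
    matNorm M x ≤ c * matNorm M y := by
  unfold matNorm
  calc Real.sqrt (x ⬝ᵥ M *ᵥ x) ≤ Real.sqrt (c ^ 2 * (y ⬝ᵥ M *ᵥ y)) := Real.sqrt_le_sqrt h
    _ = c * Real.sqrt (y ⬝ᵥ M *ᵥ y) := by rw [Real.sqrt_mul (sq_nonneg c), Real.sqrt_sq hc]

lemma matNorm_mono {p : ℕ} (M : Matrix (Fin p) (Fin p) ℝ) (x y : Fin p → ℝ)
    (h : x ⬝ᵥ M *ᵥ x ≤ y ⬝ᵥ M *ᵥ y) : matNorm M x ≤ matNorm M y := Real.sqrt_le_sqrt h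

lemma sym_of_posdef {p : ℕ} {M : Matrix (Fin p) (Fin p) ℝ} (h : M.PosDef) : Mᵀ = M := by
  rw [← Matrix.conjTranspose_eq_transpose_of_trivial]; exact h.1.eq


set_option maxHeartbeats 1600000 in
theorem key {nf nc : ℕ} (A L : Matrix (Fin nf) (Fin nf) ℝ)
    (Ac : Matrix (Fin nc) (Fin nc) ℝ) (P : Matrix (Fin nf) (Fin nc) ℝ)
    (Wc : Matrix (Fin nc) (Fin nc) ℝ)
    (hA : A.PosDef) (hAc : Ac.PosDef) (hL : L.PosDef)
    (hGal : Ac = Pᵀ * A * P)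
    (C_I C_A τ : ℝ) (hCI : 0 < C_I) (hCA : 0 < C_A) (hτ0 : 0 < τ) (hτCI : τ * C_I ≤ 1)
    (hinv : ∀ u, u ⬝ᵥ A *ᵥ u ≤ C_I * (u ⬝ᵥ L *ᵥ u))
    (happrox : ∀ u, ((1 - P * Ac⁻¹ * (Pᵀ * A)) *ᵥ u) ⬝ᵥ L *ᵥ ((1 - P * Ac⁻¹ * (Pᵀ * A)) *ᵥ u)
        ≤ C_A * (u ⬝ᵥ A *ᵥ u))
    (ν m : ℕ) (hν2m : ν = 2 * m) (hν4 : 4 * (C_A / τ) < (ν : ℝ))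
    (hWc : ∀ y, matNorm Ac (Wc *ᵥ y) ≤ 2 * (C_A / τ) / (ν : ℝ) * matNorm Ac y)
    (u : Fin nf → ℝ) :
    matNorm A (((1 - τ • (L⁻¹ * A)) ^ m *
        (1 - P * (1 - Wc ^ 2) * Ac⁻¹ * (Pᵀ * A)) * (1 - τ • (L⁻¹ * A)) ^ m) *ᵥ u)
      ≤ 2 * (C_A / τ) / (ν : ℝ) * matNorm A u := by
  set ρ : ℝ := C_A / τ with hρdef
  have hρ : 0 < ρ := div_pos hCA hτ0
  have hνpos : (0 : ℝ) < (ν : ℝ) := lt_trans (by positivity) hν4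
  set δ : ℝ := 2 * ρ / (ν : ℝ) with hδdef
  have hδ : 0 < δ := by positivity
  set S : Matrix (Fin nf) (Fin nf) ℝ := 1 - τ • (L⁻¹ * A) with hSdef
  set T : Matrix (Fin nf) (Fin nf) ℝ := P * Ac⁻¹ * (Pᵀ * A) with hTdef
  clear_value S T
  -- symmetry facts
  have hAs : Aᵀ = A := sym_of_posdef hA
  have hLs : Lᵀ = L := sym_of_posdef hL
  have hAcs : Acᵀ = Ac := sym_of_posdef hAc
  have hLinvs : (L⁻¹)ᵀ = L⁻¹ := by rw [Matrix.transpose_nonsing_inv, hLs]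
  have hAcinvs : (Ac⁻¹)ᵀ = Ac⁻¹ := by rw [Matrix.transpose_nonsing_inv, hAcs]
  have hLdet : IsUnit L.det := hL.det_pos.ne'.isUnit
  have hAcdet : IsUnit Ac.det := hAc.det_pos.ne'.isUnit
  have hLLA : L * (L⁻¹ * A) = A := by
    rw [← Matrix.mul_assoc, Matrix.mul_nonsing_inv _ hLdet, Matrix.one_mul]
  -- quadratic form positivity
  have qA_nn : ∀ x, 0 ≤ x ⬝ᵥ A *ᵥ x := psd_nn hA.posSemidef
  have qL_nn : ∀ x, 0 ≤ x ⬝ᵥ L *ᵥ x := psd_nn hL.posSemidef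
  have qAc_nn : ∀ y, 0 ≤ y ⬝ᵥ Ac *ᵥ y := psd_nn hAc.posSemidef
  have qLinv_nn : ∀ x, 0 ≤ x ⬝ᵥ L⁻¹ *ᵥ x := psd_nn hL.inv.posSemidef
  -- S-adjointness
  have hSA : Sᵀ * A = A * S := by
    rw [hSdef]
    simp only [Matrix.transpose_sub, Matrix.transpose_one, Matrix.transpose_smul,
      Matrix.transpose_mul, hAs, hLinvs, Matrix.sub_mul, Matrix.mul_sub, Matrix.one_mul,
      Matrix.mul_one, Matrix.smul_mul, Matrix.mul_smul, Matrix.mul_assoc]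
  have hSkA : ∀ j : ℕ, (S ^ j)ᵀ * A = A * S ^ j := by
    intro j
    induction j with
    | zero => simp
    | succ i ih =>
      rw [pow_succ, Matrix.transpose_mul, Matrix.mul_assoc, ih, ← Matrix.mul_assoc, hSA,
        Matrix.mul_assoc, ← pow_succ']
      rw [pow_succ]
  -- T facts
  have hPAP : ∀ {q : ℕ} (X : Matrix (Fin nc) (Fin q) ℝ), Pᵀ * (A * (P * X)) = Ac * X := by
    intro q X
    rw [hGal]
    simp only [Matrix.mul_assoc]
  have hT2 : T * T = T := by
    rw [hTdef]
    simp only [Matrix.mul_assoc]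
    rw [hPAP, Matrix.nonsing_inv_mul_cancel_left _ _ hAcdet]
  have hTA : Tᵀ * A = A * T := by
    rw [hTdef]
    simp only [Matrix.transpose_mul, Matrix.transpose_transpose, hAs, hAcinvs,
      Matrix.mul_assoc]
  have hImTA : (1 - T)ᵀ * A * (1 - T) = A * (1 - T) := by
    have hATT : A * T * T = A * T := by rw [Matrix.mul_assoc, hT2]
    simp only [Matrix.transpose_sub, Matrix.transpose_one, Matrix.sub_mul, Matrix.mul_sub,
      Matrix.one_mul, Matrix.mul_one, hTA]
    rw [hATT]
    abel
  -- basic psd combinations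
  have qALA_nn : ∀ x, 0 ≤ x ⬝ᵥ (A * L⁻¹ * A) *ᵥ x := by
    intro x
    have h1 : A * L⁻¹ * A = Aᵀ * L⁻¹ * A := by rw [hAs]
    rw [h1, ← q_cong]
    exact qLinv_nn _
  have hAImS_eq : A * (1 - S) = τ • (A * L⁻¹ * A) := by
    rw [hSdef]
    simp only [sub_sub_cancel, Matrix.mul_smul, Matrix.mul_assoc]
  have qAImS_nn : ∀ x, 0 ≤ x ⬝ᵥ (A * (1 - S)) *ᵥ x := by
    intro x
    rw [hAImS_eq, Matrix.smul_mulVec, dotProduct_smul, smul_eq_mul]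
    exact mul_nonneg hτ0.le (qALA_nn x)
  have qLmA_nn : ∀ x, 0 ≤ x ⬝ᵥ (L - τ • A) *ᵥ x := by
    intro x
    rw [Matrix.sub_mulVec, dotProduct_sub, Matrix.smul_mulVec, dotProduct_smul,
      smul_eq_mul]
    nlinarith [hinv x, qL_nn x, qA_nn x]
  have hASImS_eq : A * S * (1 - S) = τ • ((L⁻¹ * A)ᵀ * (L - τ • A) * (L⁻¹ * A)) := by
    rw [hSdef]
    simp only [Matrix.transpose_mul, hAs, hLinvs, Matrix.mul_sub, Matrix.sub_mul,
      Matrix.mul_one, Matrix.one_mul, Matrix.mul_smul, Matrix.smul_mul, smul_smul,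
      smul_sub, Matrix.mul_assoc, hLLA]
    abel
  have qASImS_nn : ∀ x, 0 ≤ x ⬝ᵥ (A * S * (1 - S)) *ᵥ x := by
    intro x
    rw [hASImS_eq, Matrix.smul_mulVec, dotProduct_smul, smul_eq_mul, ← q_cong]
    exact mul_nonneg hτ0.le (qLmA_nn _)
  -- A*S is positive semidefinite
  have hAS_eq : A * S = A - τ • (A * L⁻¹ * A) := by
    rw [hSdef]
    simp only [Matrix.mul_sub, Matrix.mul_one, Matrix.mul_smul, Matrix.mul_assoc]
  have qALA_eq : ∀ x, x ⬝ᵥ (A * L⁻¹ * A) *ᵥ x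
      = ((L⁻¹ * A) *ᵥ x) ⬝ᵥ L *ᵥ ((L⁻¹ * A) *ᵥ x) := by
    intro x
    rw [q_cong]
    congr 1
    simp only [Matrix.transpose_mul, hAs, hLinvs]
    rw [Matrix.mul_assoc (A * L⁻¹) L, hLLA]
  have qAS_nn : ∀ x, 0 ≤ x ⬝ᵥ (A * S) *ᵥ x := by
    intro x
    set w : Fin nf → ℝ := (L⁻¹ * A) *ᵥ x with hwdef
    have hLw : L *ᵥ w = A *ᵥ x := by rw [hwdef, Matrix.mulVec_mulVec, hLLA]
    have hb : w ⬝ᵥ L *ᵥ w = w ⬝ᵥ A *ᵥ x := by rw [hLw]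
    have hcs := psd_cs A hAs qA_nn w x
    have hw := hinv w
    have hbnn : 0 ≤ w ⬝ᵥ L *ᵥ w := qL_nn w
    have hcnn : 0 ≤ x ⬝ᵥ A *ᵥ x := qA_nn x
    have hτb : τ * (w ⬝ᵥ L *ᵥ w) ≤ x ⬝ᵥ A *ᵥ x := by
      rcases eq_or_lt_of_le hbnn with h0 | h0
      · nlinarith
      · have hble : w ⬝ᵥ L *ᵥ w ≤ C_I * (x ⬝ᵥ A *ᵥ x) := by nlinarith [hcs, hw, hb]
        nlinarith
    rw [hAS_eq, Matrix.sub_mulVec, dotProduct_sub, Matrix.smul_mulVec,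
      dotProduct_smul, smul_eq_mul, qALA_eq, hb]
    nlinarith [hτb, hb]
  -- commutation helper and further symmetric identities
  have hImSA : (1 - S)ᵀ * A = A * (1 - S) := by
    simp only [Matrix.transpose_sub, Matrix.transpose_one, Matrix.sub_mul, Matrix.one_mul,
      Matrix.mul_sub, Matrix.mul_one, hSA]
  -- one-step energy contraction
  have qS1 : ∀ x, (S *ᵥ x) ⬝ᵥ A *ᵥ (S *ᵥ x) ≤ x ⬝ᵥ A *ᵥ x := by
    intro x
    rw [q_cong]
    have hid : Sᵀ * A * S = A - A * (1 - S) - A * S * (1 - S) := by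
      rw [hSA]
      simp only [Matrix.mul_sub, Matrix.mul_one, Matrix.mul_assoc]
      abel
    rw [hid, Matrix.sub_mulVec, Matrix.sub_mulVec, dotProduct_sub, dotProduct_sub]
    have h1 := qAImS_nn x
    have h2 := qASImS_nn x
    linarith
  have qSk : ∀ (j : ℕ) (x : Fin nf → ℝ), (S ^ j *ᵥ x) ⬝ᵥ A *ᵥ (S ^ j *ᵥ x) ≤ x ⬝ᵥ A *ᵥ x := by
    intro j
    induction j with
    | zero => intro x; simp
    | succ i ih =>
      intro x
      have h1 : S ^ (i + 1) *ᵥ x = S ^ i *ᵥ (S *ᵥ x) := by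
        rw [Matrix.mulVec_mulVec, ← pow_succ]
      rw [h1]
      exact le_trans (ih (S *ᵥ x)) (qS1 x)
  -- psd of the two "difference" matrices used in the monotonicity argument
  have nn1 : ∀ y, 0 ≤ y ⬝ᵥ (A * (1 - S) - A * S * (1 - S)) *ᵥ y := by
    intro y
    have e : A * (1 - S) - A * S * (1 - S) = (1 - S)ᵀ * A * (1 - S) := by
      rw [hImSA]
      simp only [Matrix.mul_sub, Matrix.sub_mul, Matrix.mul_one, Matrix.one_mul,
        Matrix.mul_assoc]
    rw [e, ← q_cong]
    exact qA_nn _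
  have nn2 : ∀ y, 0 ≤ y ⬝ᵥ (A * S * (1 - S) - Sᵀ * (A * (1 - S)) * S) *ᵥ y := by
    intro y
    have e : A * S * (1 - S) - Sᵀ * (A * (1 - S)) * S = (1 - S)ᵀ * (A * S) * (1 - S) := by
      rw [← Matrix.mul_assoc Sᵀ A (1 - S), hSA, ← Matrix.mul_assoc (1 - S)ᵀ A S, hImSA]
      simp only [Matrix.mul_sub, Matrix.sub_mul, Matrix.mul_one, Matrix.one_mul,
        Matrix.mul_assoc]
    rw [e, ← q_cong]
    exact qAS_nn _
  -- the smoothing property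
  have smooth : ∀ x : Fin nf → ℝ,
      (2 * (m : ℝ) + 1) * ((S ^ m *ᵥ x) ⬝ᵥ (A * (1 - S)) *ᵥ (S ^ m *ᵥ x)) ≤ x ⬝ᵥ A *ᵥ x := by
    intro x
    set c : ℕ → ℝ := fun j => x ⬝ᵥ (A * S ^ j) *ᵥ x with hcdef
    clear_value c
    have hceven : ∀ i : ℕ, c (2 * i) = (S ^ i *ᵥ x) ⬝ᵥ A *ᵥ (S ^ i *ᵥ x) := by
      intro i
      simp only [hcdef]
      rw [q_cong]
      have e : (S ^ i)ᵀ * A * S ^ i = A * S ^ (2 * i) := by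
        rw [hSkA, Matrix.mul_assoc, ← pow_add, ← two_mul]
      rw [e]
    have hcodd : ∀ i : ℕ, c (2 * i + 1) = (S ^ i *ᵥ x) ⬝ᵥ (A * S) *ᵥ (S ^ i *ᵥ x) := by
      intro i
      simp only [hcdef]
      rw [q_cong]
      have e : (S ^ i)ᵀ * (A * S) * S ^ i = A * S ^ (2 * i + 1) := by
        rw [← Matrix.mul_assoc (S ^ i)ᵀ A S, hSkA, Matrix.mul_assoc (A * S ^ i) S,
          Matrix.mul_assoc A (S ^ i), ← pow_succ', ← pow_add]
        have e2 : i + (i + 1) = 2 * i + 1 := by omega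
        rw [e2]
      rw [e]
    have hbeven : ∀ i, c (2 * i) - c (2 * i + 1)
        = (S ^ i *ᵥ x) ⬝ᵥ (A * (1 - S)) *ᵥ (S ^ i *ᵥ x) := by
      intro i
      rw [hceven i, hcodd i, Matrix.mul_sub, Matrix.mul_one, Matrix.sub_mulVec,
        dotProduct_sub]
    have hbodd : ∀ i, c (2 * i + 1) - c (2 * (i + 1))
        = (S ^ i *ᵥ x) ⬝ᵥ (A * S * (1 - S)) *ᵥ (S ^ i *ᵥ x) := by
      intro i
      rw [hcodd i, hceven (i + 1)]
      have h3 : S ^ (i + 1) *ᵥ x = S *ᵥ (S ^ i *ᵥ x) := by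
        rw [Matrix.mulVec_mulVec, ← pow_succ']
      rw [h3, q_cong A S (S ^ i *ᵥ x)]
      have h4 : Sᵀ * A * S = A * S * S := by rw [hSA]
      have h5 : A * S * (1 - S) = A * S - A * S * S := by
        rw [Matrix.mul_sub, Matrix.mul_one]
      rw [h4, h5, Matrix.sub_mulVec, dotProduct_sub]
    have hbmono : ∀ j, c (j + 1) - c (j + 1 + 1) ≤ c j - c (j + 1) := by
      intro j
      rcases Nat.even_or_odd j with ⟨i, hi⟩ | ⟨i, hi⟩
      · have hj : j = 2 * i := by omega
        subst hj
        rw [show 2 * i + 1 + 1 = 2 * (i + 1) from by omega, hbodd i, hbeven i]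
        have h := nn1 (S ^ i *ᵥ x)
        rw [Matrix.sub_mulVec, dotProduct_sub] at h
        linarith
      · have hj : j = 2 * i + 1 := by omega
        subst hj
        rw [show 2 * i + 1 + 1 = 2 * (i + 1) from by omega, hbeven (i + 1), hbodd i]
        have h3 : S ^ (i + 1) *ᵥ x = S *ᵥ (S ^ i *ᵥ x) := by
          rw [Matrix.mulVec_mulVec, ← pow_succ']
        rw [h3, q_cong (A * (1 - S)) S (S ^ i *ᵥ x)]
        have h := nn2 (S ^ i *ᵥ x)
        rw [Matrix.sub_mulVec, dotProduct_sub] at h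
        linarith
    have hbanti : Antitone (fun j => c j - c (j + 1)) := antitone_nat_of_succ_le hbmono
    have hsum : ∑ j ∈ Finset.range (2 * m + 1), (c j - c (j + 1)) = c 0 - c (2 * m + 1) :=
      Finset.sum_range_sub' c (2 * m + 1)
    have hlast : ((2 * m + 1 : ℕ) : ℝ) * (c (2 * m) - c (2 * m + 1))
        ≤ ∑ j ∈ Finset.range (2 * m + 1), (c j - c (j + 1)) := by
      calc ((2 * m + 1 : ℕ) : ℝ) * (c (2 * m) - c (2 * m + 1))
          = ∑ _j ∈ Finset.range (2 * m + 1), (c (2 * m) - c (2 * m + 1)) := by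
            rw [Finset.sum_const, Finset.card_range, nsmul_eq_mul]
        _ ≤ ∑ j ∈ Finset.range (2 * m + 1), (c j - c (j + 1)) := by
            apply Finset.sum_le_sum
            intro j hj
            have hjle : j ≤ 2 * m := by
              have := Finset.mem_range.mp hj
              omega
            exact hbanti hjle
    have hc0 : c 0 = x ⬝ᵥ A *ᵥ x := by
      rw [hcdef]
      simp
    have hctail : 0 ≤ c (2 * m + 1) := by
      rw [hcodd m]
      exact qAS_nn _
    have hfin : ((2 * m + 1 : ℕ) : ℝ) * (c (2 * m) - c (2 * m + 1)) ≤ x ⬝ᵥ A *ᵥ x := by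
      rw [← hc0]
      nlinarith [hlast, hsum, hctail, (by positivity : (0:ℝ) ≤ ((2 * m + 1 : ℕ) : ℝ))]
    have hcast : ((2 * m + 1 : ℕ) : ℝ) = 2 * (m : ℝ) + 1 := by push_cast; ring
    rw [← hbeven m, ← hcast]
    exact hfin
  -- the two-grid form bound
  set κ : ℝ := 2 * (m : ℝ) + 1 with hκdef
  have hκpos : 0 < κ := by positivity
  set η : ℝ := ρ / κ with hηdef
  have hηnn : 0 ≤ η := by positivity
  set M1 : Matrix (Fin nf) (Fin nf) ℝ := (1 - T) * S ^ m with hM1def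
  set E : Matrix (Fin nf) (Fin nf) ℝ := S ^ m * (1 - T) * S ^ m with hEdef
  set G : Matrix (Fin nf) (Fin nf) ℝ := A * E with hGdef
  clear_value M1 E G
  have hG : M1ᵀ * A * M1 = G := by
    calc M1ᵀ * A * M1 = (S ^ m)ᵀ * ((1 - T)ᵀ * A * (1 - T)) * S ^ m := by
          rw [hM1def]
          simp only [Matrix.transpose_mul, Matrix.mul_assoc]
      _ = (S ^ m)ᵀ * (A * (1 - T)) * S ^ m := by rw [hImTA]
      _ = G := by
          rw [hGdef, hEdef, ← Matrix.mul_assoc (S ^ m)ᵀ A (1 - T), hSkA]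
          simp only [Matrix.mul_assoc]
  have hGsym : Gᵀ = G := by
    rw [← hG]
    simp only [Matrix.transpose_mul, Matrix.transpose_transpose, hAs, Matrix.mul_assoc]
  have hGnn : ∀ x, 0 ≤ x ⬝ᵥ G *ᵥ x := by
    intro x
    rw [← hG, ← q_cong]
    exact qA_nn _
  have hImT2 : (1 - T) * (1 - T) = 1 - T := by
    simp only [Matrix.mul_sub, Matrix.sub_mul, Matrix.mul_one, Matrix.one_mul, hT2]
    abel
  have hGbound : ∀ x, x ⬝ᵥ G *ᵥ x ≤ η * (x ⬝ᵥ A *ᵥ x) := by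
    intro x
    set v : Fin nf → ℝ := S ^ m *ᵥ x with hvdef
    set w : Fin nf → ℝ := (1 - T) *ᵥ v with hwdef
    clear_value v w
    have hx1 : x ⬝ᵥ G *ᵥ x = w ⬝ᵥ A *ᵥ w := by
      rw [← hG, ← q_cong, hwdef, hvdef, hM1def, ← Matrix.mulVec_mulVec]
    set α : ℝ := w ⬝ᵥ A *ᵥ w with hαdef
    have hαnn : 0 ≤ α := qA_nn w
    have hz0 : (1 - T)ᵀ * (A * T) = 0 := by
      simp only [Matrix.transpose_sub, Matrix.transpose_one, Matrix.sub_mul, Matrix.one_mul]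
      rw [← Matrix.mul_assoc, hTA, Matrix.mul_assoc, hT2, sub_self]
    have h1 : w ⬝ᵥ A *ᵥ (T *ᵥ v) = 0 := by
      rw [hwdef, Matrix.mulVec_mulVec, dp_mul, hz0, Matrix.zero_mulVec, dotProduct_zero]
    have h2 : α = w ⬝ᵥ A *ᵥ v := by
      have hv : A *ᵥ v = A *ᵥ w + A *ᵥ (T *ᵥ v) := by
        rw [hwdef, Matrix.sub_mulVec, Matrix.one_mulVec, Matrix.mulVec_sub,
          Matrix.mulVec_mulVec]
        abel
      rw [hv, dotProduct_add, h1, add_zero, hαdef]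
    set z : Fin nf → ℝ := (L⁻¹ * A) *ᵥ v with hzdef
    clear_value z
    have h3 : w ⬝ᵥ A *ᵥ v = w ⬝ᵥ L *ᵥ z := by
      rw [hzdef, Matrix.mulVec_mulVec, ← Matrix.mul_assoc, Matrix.mul_nonsing_inv _ hLdet,
        Matrix.one_mul]
    have h4 : w ⬝ᵥ L *ᵥ w ≤ C_A * α := by
      have hap := happrox w
      have hww : (1 - T) *ᵥ w = w := by
        rw [hwdef, Matrix.mulVec_mulVec, hImT2]
      rw [hww] at hap
      exact hap
    have h5 : κ * (τ * (z ⬝ᵥ L *ᵥ z)) ≤ x ⬝ᵥ A *ᵥ x := by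
      have hs := smooth x
      have he : v ⬝ᵥ (A * (1 - S)) *ᵥ v = τ * (z ⬝ᵥ L *ᵥ z) := by
        rw [hAImS_eq, Matrix.smul_mulVec, dotProduct_smul, smul_eq_mul, qALA_eq v,
          hzdef]
      rw [← hvdef] at hs
      rw [← he]
      exact hs
    have hcs := psd_cs L hLs qL_nn w z
    have hznn : 0 ≤ z ⬝ᵥ L *ᵥ z := qL_nn z
    have hwLw : 0 ≤ w ⬝ᵥ L *ᵥ w := qL_nn w
    -- α² ≤ (C_A α)(z⬝Lz), and κ τ (z⬝Lz) ≤ x⬝Ax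
    have hα2 : α ^ 2 ≤ C_A * α * (z ⬝ᵥ L *ᵥ z) := by
      have : α = w ⬝ᵥ L *ᵥ z := by rw [h2, h3]
      nlinarith [hcs, h4, hznn]
    rw [hηdef, hρdef]
    rcases eq_or_lt_of_le hαnn with h0 | h0
    · rw [hx1, ← h0]
      exact mul_nonneg (by positivity) (qA_nn x)
    · have hb : α * (τ * κ) ≤ C_A * (x ⬝ᵥ A *ᵥ x) := by
        have hαle : α ≤ C_A * (z ⬝ᵥ L *ᵥ z) := by nlinarith [hα2]
        have := mul_le_mul_of_nonneg_left h5 hCA.le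
        nlinarith [this, hαle, mul_pos hτ0 hκpos, hCA]
      rw [hx1, div_div, div_mul_eq_mul_div, le_div_iff₀ (by positivity)]
      nlinarith [hb]
  -- squared two-grid bound
  have qE : ∀ x, (E *ᵥ x) ⬝ᵥ A *ᵥ (E *ᵥ x) ≤ η ^ 2 * (x ⬝ᵥ A *ᵥ x) := by
    intro x
    set z : Fin nf → ℝ := E *ᵥ x with hzdef
    set β : ℝ := z ⬝ᵥ A *ᵥ z with hβdef
    clear_value z β
    have hβnn : 0 ≤ β := by rw [hβdef]; exact qA_nn z
    have hAz : A *ᵥ z = G *ᵥ x := by rw [hzdef, Matrix.mulVec_mulVec, ← hGdef]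
    have hβ1 : β = x ⬝ᵥ G *ᵥ z := by
      rw [hβdef, hAz, dp_swap, hGsym]
    have hcs := psd_cs G hGsym hGnn x z
    have hzG : z ⬝ᵥ G *ᵥ z ≤ η * β := by
      rw [hβdef]
      exact hGbound z
    have hxG : x ⬝ᵥ G *ᵥ x ≤ η * (x ⬝ᵥ A *ᵥ x) := hGbound x
    have hGx_nn : 0 ≤ x ⬝ᵥ G *ᵥ x := hGnn x
    have hGz_nn : 0 ≤ z ⬝ᵥ G *ᵥ z := hGnn z
    have hβ2 : β ^ 2 ≤ η * (x ⬝ᵥ A *ᵥ x) * (η * β) := by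
      calc β ^ 2 = (x ⬝ᵥ G *ᵥ z) ^ 2 := by rw [hβ1]
        _ ≤ (x ⬝ᵥ G *ᵥ x) * (z ⬝ᵥ G *ᵥ z) := hcs
        _ ≤ η * (x ⬝ᵥ A *ᵥ x) * (η * β) := by
            apply mul_le_mul hxG hzG hGz_nn
            exact mul_nonneg hηnn (qA_nn x)
    show β ≤ η ^ 2 * (x ⬝ᵥ A *ᵥ x)
    rcases eq_or_lt_of_le hβnn with h0 | h0
    · rw [← h0]
      exact mul_nonneg (sq_nonneg η) (qA_nn x)
    · nlinarith [hβ2, qA_nn x]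
  -- assembly of the W-cycle bound
  have hCAC : (Ac⁻¹ * (Pᵀ * A))ᵀ * Ac * (Ac⁻¹ * (Pᵀ * A)) = A * T := by
    rw [hTdef]
    simp only [Matrix.transpose_mul, Matrix.transpose_transpose, hAs, hAcinvs,
      Matrix.mul_assoc]
    rw [Matrix.nonsing_inv_mul_cancel_left _ _ hAcdet]
  have hATle : ∀ v : Fin nf → ℝ, v ⬝ᵥ (A * T) *ᵥ v ≤ v ⬝ᵥ A *ᵥ v := by
    intro v
    have h := q_cong A (1 - T) v
    rw [hImTA] at h
    have hnn := qA_nn ((1 - T) *ᵥ v)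
    rw [h] at hnn
    have he : A * (1 - T) = A - A * T := by rw [Matrix.mul_sub, Matrix.mul_one]
    rw [he, Matrix.sub_mulVec, dotProduct_sub] at hnn
    linarith
  have hsplit : S ^ m * (1 - P * (1 - Wc ^ 2) * Ac⁻¹ * (Pᵀ * A)) * S ^ m
      = E + S ^ m * (P * Wc ^ 2 * Ac⁻¹ * (Pᵀ * A)) * S ^ m := by
    rw [hEdef, hTdef]
    simp only [Matrix.mul_sub, Matrix.sub_mul, Matrix.mul_one, Matrix.one_mul,
      Matrix.mul_assoc]
    abel
  rw [hsplit, Matrix.add_mulVec]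
  have htri := matNorm_add A hAs qA_nn (E *ᵥ u)
    ((S ^ m * (P * Wc ^ 2 * Ac⁻¹ * (Pᵀ * A)) * S ^ m) *ᵥ u)
  have hE : matNorm A (E *ᵥ u) ≤ η * matNorm A u :=
    matNorm_le_of_sq A _ u η hηnn (qE u)
  have hKvec : (S ^ m * (P * Wc ^ 2 * Ac⁻¹ * (Pᵀ * A)) * S ^ m) *ᵥ u
      = S ^ m *ᵥ (P *ᵥ (Wc *ᵥ (Wc *ᵥ ((Ac⁻¹ * (Pᵀ * A)) *ᵥ (S ^ m *ᵥ u))))) := by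
    rw [pow_two]
    simp only [← Matrix.mulVec_mulVec, Matrix.mul_assoc]
  have hstep1 : matNorm A (S ^ m *ᵥ (P *ᵥ (Wc *ᵥ (Wc *ᵥ ((Ac⁻¹ * (Pᵀ * A)) *ᵥ (S ^ m *ᵥ u))))))
      ≤ matNorm A (P *ᵥ (Wc *ᵥ (Wc *ᵥ ((Ac⁻¹ * (Pᵀ * A)) *ᵥ (S ^ m *ᵥ u))))) :=
    matNorm_mono A _ _ (qSk m _)
  have hPiso : ∀ y : Fin nc → ℝ, matNorm A (P *ᵥ y) = matNorm Ac y := by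
    intro y
    unfold matNorm
    rw [q_cong, ← hGal]
  have hWc2 : ∀ r : Fin nc → ℝ, matNorm Ac (Wc *ᵥ (Wc *ᵥ r)) ≤ δ * (δ * matNorm Ac r) := by
    intro r
    calc matNorm Ac (Wc *ᵥ (Wc *ᵥ r)) ≤ δ * matNorm Ac (Wc *ᵥ r) := hWc _
      _ ≤ δ * (δ * matNorm Ac r) := mul_le_mul_of_nonneg_left (hWc r) hδ.le
  have hrestr : ∀ v : Fin nf → ℝ, matNorm Ac ((Ac⁻¹ * (Pᵀ * A)) *ᵥ v) ≤ matNorm A v := by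
    intro v
    unfold matNorm
    apply Real.sqrt_le_sqrt
    rw [q_cong, hCAC]
    exact hATle v
  have hvle : matNorm A (S ^ m *ᵥ u) ≤ matNorm A u := matNorm_mono A _ _ (qSk m u)
  have hK : matNorm A ((S ^ m * (P * Wc ^ 2 * Ac⁻¹ * (Pᵀ * A)) * S ^ m) *ᵥ u)
      ≤ δ * δ * matNorm A u := by
    rw [hKvec]
    refine le_trans hstep1 ?_
    rw [hPiso]
    refine le_trans (hWc2 _) ?_
    have hch := le_trans (hrestr (S ^ m *ᵥ u)) hvle
    calc δ * (δ * matNorm Ac ((Ac⁻¹ * (Pᵀ * A)) *ᵥ (S ^ m *ᵥ u)))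
        ≤ δ * (δ * matNorm A u) :=
          mul_le_mul_of_nonneg_left (mul_le_mul_of_nonneg_left hch hδ.le) hδ.le
      _ = δ * δ * matNorm A u := by ring
  have hηδ : η + δ * δ ≤ δ := by
    have hκν : κ = (ν : ℝ) + 1 := by
      rw [hκdef, hν2m]
      push_cast
      ring
    have h1 : η ≤ ρ / (ν : ℝ) := by
      rw [hηdef, hκν, div_le_div_iff₀ (by linarith) hνpos]
      nlinarith [hρ.le, hνpos]
    have h2 : δ * δ ≤ ρ / (ν : ℝ) := by
      have ha : δ ≤ 1 / 2 := by
        rw [hδdef, div_le_div_iff₀ hνpos two_pos]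
        linarith
      have hb : δ * δ ≤ 1 / 2 * δ := mul_le_mul_of_nonneg_right ha hδ.le
      have hc : 1 / 2 * δ = ρ / (ν : ℝ) := by rw [hδdef]; ring
      linarith
    have h3 : ρ / (ν : ℝ) + ρ / (ν : ℝ) = δ := by rw [hδdef]; ring
    linarith
  calc matNorm A (E *ᵥ u + (S ^ m * (P * Wc ^ 2 * Ac⁻¹ * (Pᵀ * A)) * S ^ m) *ᵥ u)
      ≤ matNorm A (E *ᵥ u)
        + matNorm A ((S ^ m * (P * Wc ^ 2 * Ac⁻¹ * (Pᵀ * A)) * S ^ m) *ᵥ u) := htri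
    _ ≤ η * matNorm A u + δ * δ * matNorm A u := add_le_add hE hK
    _ ≤ δ * matNorm A u := by nlinarith [hηδ, matNorm_nonneg A u]

end MGaux

/-- W-cycle multigrid convergence. Under the level-wise inverse
inequality (constant `C_I`) and approximation property (constant `C_A`), with
`τ ∈ (0, 1/C_I]`, `ν₀ = C_A/τ`, `ν` even with `ν > 4ν₀`, smoothers
`S_ℓ = I − τ L_ℓ⁻¹ A_ℓ`, and the W-cycle iteration matrices `W_ℓ` defined by
`W_0 = 0`, `W_ℓ = S_ℓ^{ν/2} (I − P_ℓ (I − W_{ℓ−1}²) A_{ℓ−1}⁻¹ P_ℓᵀ A_ℓ) S_ℓ^{ν/2}`,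
one has `‖W_ℓ u‖_{A_ℓ} ≤ (2ν₀/ν) ‖u‖_{A_ℓ}` for all `ℓ ≤ N`. -/
theorem stmt5 (N : ℕ) (n : ℕ → ℕ)
    (A L : ∀ ℓ : ℕ, Matrix (Fin (n ℓ)) (Fin (n ℓ)) ℝ)
    (P : ∀ ℓ : ℕ, Matrix (Fin (n ℓ)) (Fin (n (ℓ - 1))) ℝ)
    (hA : ∀ ℓ : ℕ, ℓ ≤ N → (A ℓ).PosDef)
    (hL : ∀ ℓ : ℕ, 1 ≤ ℓ → ℓ ≤ N → (L ℓ).PosDef)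
    (hrank : ∀ ℓ : ℕ, 1 ≤ ℓ → ℓ ≤ N → (P ℓ).rank = n (ℓ - 1))
    (hGal : ∀ ℓ : ℕ, 1 ≤ ℓ → ℓ ≤ N → A (ℓ - 1) = (P ℓ)ᵀ * A ℓ * P ℓ)
    (C_I C_A : ℝ) (hCI : 0 < C_I) (hCA : 0 < C_A)
    (hinv : ∀ ℓ : ℕ, 1 ≤ ℓ → ℓ ≤ N → ∀ u : Fin (n ℓ) → ℝ,
        u ⬝ᵥ (A ℓ) *ᵥ u ≤ C_I * (u ⬝ᵥ (L ℓ) *ᵥ u))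
    (happrox : ∀ ℓ : ℕ, 1 ≤ ℓ → ℓ ≤ N → ∀ u : Fin (n ℓ) → ℝ,
        ((1 - P ℓ * (A (ℓ - 1))⁻¹ * ((P ℓ)ᵀ * A ℓ)) *ᵥ u) ⬝ᵥ
            (L ℓ) *ᵥ ((1 - P ℓ * (A (ℓ - 1))⁻¹ * ((P ℓ)ᵀ * A ℓ)) *ᵥ u)
          ≤ C_A * (u ⬝ᵥ (A ℓ) *ᵥ u))
    (τ : ℝ) (hτ0 : 0 < τ) (hτ1 : τ ≤ 1 / C_I)
    (ν : ℕ) (hνeven : Even ν) (hν : 4 * (C_A / τ) < (ν : ℝ))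
    (S : ∀ ℓ : ℕ, Matrix (Fin (n ℓ)) (Fin (n ℓ)) ℝ)
    (hS : ∀ ℓ : ℕ, S ℓ = 1 - τ • ((L ℓ)⁻¹ * A ℓ))
    (W : ∀ ℓ : ℕ, Matrix (Fin (n ℓ)) (Fin (n ℓ)) ℝ)
    (hW0 : W 0 = 0)
    (hWrec : ∀ ℓ : ℕ, 1 ≤ ℓ → ℓ ≤ N → W ℓ =
        (S ℓ) ^ (ν / 2) *
          (1 - P ℓ * (1 - (W (ℓ - 1)) ^ 2) * (A (ℓ - 1))⁻¹ * ((P ℓ)ᵀ * A ℓ)) *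
          (S ℓ) ^ (ν / 2)) :
    ∀ ℓ : ℕ, ℓ ≤ N → ∀ u : Fin (n ℓ) → ℝ,
      matNorm (A ℓ) ((W ℓ) *ᵥ u) ≤ (2 * (C_A / τ) / (ν : ℝ)) * matNorm (A ℓ) u := by
  
  intro ℓ
  induction ℓ with
  | zero =>
    intro _ u
    rw [hW0]
    have h0 : matNorm (A 0) ((0 : Matrix (Fin (n 0)) (Fin (n 0)) ℝ) *ᵥ u) = 0 := by
      simp [matNorm]
    rw [h0]
    have h1 : 0 ≤ 2 * (C_A / τ) / (ν : ℝ) := by positivity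
    exact mul_nonneg h1 (MGaux.matNorm_nonneg _ _)
  | succ k ih =>
    intro hk u
    have hk1 : k ≤ N := le_trans (Nat.le_succ k) hk
    have h1k : 1 ≤ k + 1 := Nat.le_add_left 1 k
    obtain ⟨m, hm⟩ := hνeven
    have hν2m : ν = 2 * m := by omega
    have hdiv : ν / 2 = m := by omega
    have hτCI : τ * C_I ≤ 1 := by
      rw [← le_div_iff₀ hCI]
      simpa using hτ1
    rw [hWrec (k + 1) h1k hk, hS (k + 1), hdiv]
    have hGal' := hGal (k + 1) h1k hk
    have happ' := happrox (k + 1) h1k hk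
    have hih : ∀ y : Fin (n k) → ℝ,
        matNorm (A k) (W k *ᵥ y) ≤ 2 * (C_A / τ) / (ν : ℝ) * matNorm (A k) y :=
      fun y => ih hk1 y
    exact MGaux.key (A (k + 1)) (L (k + 1)) (A k) (P (k + 1)) (W k) (hA _ hk) (hA k hk1)
      (hL _ h1k hk) hGal' C_I C_A τ hCI hCA hτ0 hτCI (hinv _ h1k hk) happ'
      ν m hν2m hν hih u
end

section
/- For every integer p ≥ 1 and every integer n > p, every spline u ∈ S̃_{p,n} satisfies the inverse inequality |u|_{H¹(0,1)} ≤ 2·√3·n·‖u‖_{L²(0,1)}. -/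
open MeasureTheory

/-- `u` belongs to the spline space `S_{p,n}` on `[0,1]` with uniform grid size
`h = 1/n`: it is `(p−1)`-times continuously differentiable on `[0,1]` and
coincides on each subinterval `[(i−1)h, ih]` with a polynomial of degree `≤ p`. -/
def IsSpline (p n : ℕ) (u : ℝ → ℝ) : Prop :=
  ContDiffOn ℝ (p - 1 : ℕ) u (Set.Icc 0 1) ∧
  ∀ i : ℕ, 1 ≤ i → i ≤ n →
    ∃ q : Polynomial ℝ, q.natDegree ≤ p ∧
      ∀ x ∈ Set.Icc (((i : ℝ) - 1) / n) ((i : ℝ) / n), u x = q.eval x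

/-- `u` belongs to the subspace `S̃_{p,n} ⊆ S_{p,n}` of splines whose odd-order
derivatives of order `< p` vanish at both endpoints of `[0,1]`. -/
def IsSplineTilde (p n : ℕ) (u : ℝ → ℝ) : Prop :=
  IsSpline p n u ∧
  ∀ l : ℕ, 2 * l + 1 < p →
    iteratedDerivWithin (2 * l + 1) u (Set.Icc 0 1) 0 = 0 ∧
    iteratedDerivWithin (2 * l + 1) u (Set.Icc 0 1) 1 = 0

/-- Squared `L²(0,1)`-norm. -/
noncomputable def L2sq (u : ℝ → ℝ) : ℝ := ∫ x in (0:ℝ)..1, u x ^ 2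

/-- Squared `H¹(0,1)`-seminorm (the derivative is taken pointwise; for the
functions considered it exists away from a finite set of knots). -/
noncomputable def H1semisq (u : ℝ → ℝ) : ℝ := ∫ x in (0:ℝ)..1, deriv u x ^ 2

/-- Squared `H¹(0,1)`-norm. -/
noncomputable def H1sq (u : ℝ → ℝ) : ℝ := L2sq u + H1semisq u

/-- `u` belongs to `H¹(0,1)` with (weak) derivative `u'`: `u` is continuous on
`[0,1]` and `u'` is square-integrable on `(0,1)` with
`u x = u 0 + ∫₀ˣ u'`. -/
def IsH1 (u u' : ℝ → ℝ) : Prop :=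
  ContinuousOn u (Set.Icc 0 1) ∧
  IntegrableOn u' (Set.Ioo 0 1) ∧
  IntegrableOn (fun x => u' x ^ 2) (Set.Ioo 0 1) ∧
  ∀ x ∈ Set.Icc (0:ℝ) 1, u x = u 0 + ∫ t in (0:ℝ)..x, u' t


open MeasureTheory Polynomial intervalIntegral

noncomputable def Jint (n : ℕ) (q r : ℕ → Polynomial ℝ) : ℝ :=
  ∑ i ∈ Finset.range n, ∫ x in ((i:ℝ)/n)..(((i:ℝ)+1)/n), (q i).eval x * (r i).eval x

lemma knot_le (n i : ℕ) (hn : 1 ≤ n) : ((i:ℝ)/n) ≤ ((i:ℝ)+1)/n := by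
  have : (0:ℝ) < n := by exact_mod_cast hn
  apply div_le_div_of_nonneg_right ?_ ?_ <;> linarith

lemma Jint_nonneg (n : ℕ) (hn : 1 ≤ n) (q : ℕ → Polynomial ℝ) : 0 ≤ Jint n q q := by
  apply Finset.sum_nonneg
  intro i _
  apply intervalIntegral.integral_nonneg (knot_le n i hn)
  intro x _
  exact mul_self_nonneg _

lemma poly_intble (P : Polynomial ℝ) (a b : ℝ) :
    IntervalIntegrable (fun x => P.eval x) volume a b :=
  (P.continuous_aeval).intervalIntegrable a b

-- FTC for polynomials
lemma poly_ftc (P : Polynomial ℝ) (a b : ℝ) :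
    ∫ x in a..b, (P.derivative).eval x = P.eval b - P.eval a := by
  have h : ∀ x, eval x (derivative P) = deriv (fun y => P.eval y) x := fun x => (Polynomial.deriv (p := P)).symm
  simp only [h]
  apply intervalIntegral.integral_deriv_eq_sub (f := fun x => P.eval x)
  · intro x _; exact P.differentiableAt
  · have h2 : (deriv fun x => P.eval x) = fun x => eval x (derivative P) := by
      funext x; exact Polynomial.deriv (𝕜 := ℝ) (p := P)
    rw [h2]; exact poly_intble _ _ _

-- integration by parts per element
lemma poly_ibp (P Q : Polynomial ℝ) (a b : ℝ) :
    ∫ x in a..b, (P.derivative).eval x * Q.eval x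
      = (P*Q).eval b - (P*Q).eval a - ∫ x in a..b, P.eval x * (Q.derivative).eval x := by
  have h := poly_ftc (P*Q) a b
  rw [derivative_mul] at h
  have hsplit : ∫ x in a..b, eval x (derivative P * Q + P * derivative Q)
      = (∫ x in a..b, (P.derivative).eval x * Q.eval x)
        + ∫ x in a..b, P.eval x * (Q.derivative).eval x := by
    rw [← intervalIntegral.integral_add]
    · simp [eval_add, eval_mul]
    · have := poly_intble (P.derivative * Q) a b
      simpa [eval_mul] using this
    · have := poly_intble (P * Q.derivative) a b
      simpa [eval_mul] using this
  rw [hsplit] at h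
  linarith

-- telescoping integration by parts over the grid
lemma Jint_ibp (n : ℕ) (hn : 1 ≤ n) (f : ℕ → Polynomial ℝ)
    (hk : ∀ i, 1 ≤ i → i < n →
      (f (i-1) * derivative (f (i-1))).eval ((i:ℝ)/n) = (f i * derivative (f i)).eval ((i:ℝ)/n))
    (h0 : (f 0 * derivative (f 0)).eval 0 = 0)
    (h1 : (f (n-1) * derivative (f (n-1))).eval 1 = 0) :
    Jint n (fun i => (f i).derivative) (fun i => (f i).derivative)
      = - Jint n f (fun i => ((f i).derivative).derivative) := by
  set w : ℕ → ℝ := fun i => (f (min i (n-1)) * derivative (f (min i (n-1)))).eval ((i:ℝ)/n) with hw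
  have key : ∀ i ∈ Finset.range n,
      (∫ x in ((i:ℝ)/n)..(((i:ℝ)+1)/n), ((f i).derivative).eval x * ((f i).derivative).eval x)
      = (w (i+1) - w i) - ∫ x in ((i:ℝ)/n)..(((i:ℝ)+1)/n), (f i).eval x * (((f i).derivative).derivative).eval x := by
    intro i hi
    rw [Finset.mem_range] at hi
    have h1i : w (i+1) = (f i * derivative (f i)).eval (((i:ℝ)+1)/n) := by
      rcases eq_or_lt_of_le (Nat.succ_le_of_lt hi) with h | h
      · -- i+1 = n
        have : min (i+1) (n-1) = i := by omega
        rw [hw]; simp only [this]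
        norm_num
      · -- i+1 ≤ n-1 : use matching at knot i+1
        have hmin : min (i+1) (n-1) = i + 1 := by omega
        have := hk (i+1) (by omega) (by omega)
        simp only [Nat.add_sub_cancel] at this
        rw [hw]; simp only [hmin]
        rw [← this]
        push_cast
        ring_nf
    have h0i : w i = (f i * derivative (f i)).eval ((i:ℝ)/n) := by
      have hmin : min i (n-1) = i := by omega
      rw [hw]; simp only [hmin]
    rw [h1i, h0i, poly_ibp]
  rw [Jint, Finset.sum_congr rfl key]
  rw [Finset.sum_sub_distrib, Finset.sum_range_sub w]
  have hwn : w n = 0 := by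
    have hmin : min n (n-1) = n - 1 := by omega
    rw [hw]; simp only [hmin]
    have : ((n:ℝ))/n = 1 := by
      field_simp
    rw [this, h1]
  have hw0 : w 0 = 0 := by
    rw [hw]; simp only [Nat.cast_zero, zero_div]
    simpa using h0
  rw [hwn, hw0, Jint]
  ring

lemma Jint_expand (n : ℕ) (q r : ℕ → Polynomial ℝ) (t : ℝ) :
    Jint n (fun i => q i + C t * r i) (fun i => q i + C t * r i)
      = Jint n q q + 2 * t * Jint n q r + t^2 * Jint n r r := by
  have key : ∀ i ∈ Finset.range n,
      (∫ x in ((i:ℝ)/n)..(((i:ℝ)+1)/n), (q i + C t * r i).eval x * (q i + C t * r i).eval x)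
      = (∫ x in ((i:ℝ)/n)..(((i:ℝ)+1)/n), (q i).eval x * (q i).eval x)
        + (2*t) * (∫ x in ((i:ℝ)/n)..(((i:ℝ)+1)/n), (q i).eval x * (r i).eval x)
        + t^2 * (∫ x in ((i:ℝ)/n)..(((i:ℝ)+1)/n), (r i).eval x * (r i).eval x) := by
    intro i _
    rw [← intervalIntegral.integral_const_mul, ← intervalIntegral.integral_const_mul,
      ← intervalIntegral.integral_add, ← intervalIntegral.integral_add]
    · apply intervalIntegral.integral_congr
      intro x _
      simp only [eval_add, eval_mul, eval_C]
      ring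
    all_goals apply Continuous.intervalIntegrable
    all_goals fun_prop
  rw [Jint, Finset.sum_congr rfl key, Finset.sum_add_distrib, Finset.sum_add_distrib,
    ← Finset.mul_sum, ← Finset.mul_sum, Jint, Jint, Jint]

lemma quad_cs {A B C : ℝ} (hA : 0 ≤ A) (hC : 0 ≤ C) (h : ∀ t : ℝ, 0 ≤ A + 2*t*B + t^2*C) :
    B^2 ≤ A * C := by
  rcases eq_or_lt_of_le hC with hC0 | hCpos
  · -- C = 0 : show B = 0
    have hB : B = 0 := by
      by_contra hB
      have ht := h (-(A+1)/(2*B))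
      rw [← hC0] at ht
      have : A + 2 * (-(A+1)/(2*B)) * B + (-(A+1)/(2*B))^2 * 0 = -1 := by
        field_simp
        ring
      linarith [this ▸ ht]
    rw [hB]
    nlinarith
  · have ht := h (-B/C)
    have : A + 2 * (-B/C) * B + (-B/C)^2 * C = A - B^2/C := by
      field_simp
      ring
    rw [this] at ht
    have := (div_le_iff₀ hCpos).mp (by linarith : B^2/C ≤ A)
    linarith

lemma Jint_cs (n : ℕ) (hn : 1 ≤ n) (q r : ℕ → Polynomial ℝ) :
    (Jint n q r)^2 ≤ Jint n q q * Jint n r r := by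
  apply quad_cs (Jint_nonneg n hn q) (Jint_nonneg n hn r)
  intro t
  rw [← Jint_expand]
  exact Jint_nonneg n hn _

-- the element-wise inverse inequality for linear polynomials
lemma elem_base (n : ℕ) (hn : 1 ≤ n) (a : ℝ) (P : Polynomial ℝ) (hdeg : P.natDegree ≤ 1) :
    (∫ x in a..(a + 1/n), (P.derivative).eval x * (P.derivative).eval x)
      ≤ 12 * (n:ℝ)^2 * ∫ x in a..(a + 1/n), P.eval x * P.eval x := by
  obtain ⟨c₁, c₀, rfl⟩ := exists_eq_X_add_C_of_natDegree_le_one hdeg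
  have hnp : (0:ℝ) < n := by exact_mod_cast hn
  set b : ℝ := a + 1/n with hb
  clear_value b
  have hI1 : (∫ x in a..b, (derivative (C c₁ * X + C c₀)).eval x * (derivative (C c₁ * X + C c₀)).eval x)
      = c₁^2 * (b - a) := by
    simp only [derivative_add, derivative_mul, derivative_C, derivative_X, zero_mul, mul_one,
      zero_add, add_zero, eval_C]
    rw [intervalIntegral.integral_const]
    simp [sq]
    ring
  have hI2 : (∫ x in a..b, (C c₁ * X + C c₀).eval x * (C c₁ * X + C c₀).eval x)
      = c₁^2 * ((b^3 - a^3)/3) + 2*c₁*c₀ * ((b^2-a^2)/2) + c₀^2 * (b - a) := by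
    have : ∀ x : ℝ, (C c₁ * X + C c₀).eval x * (C c₁ * X + C c₀).eval x
        = c₁^2 * x^2 + 2*c₁*c₀ * x + c₀^2 := by
      intro x; simp [eval_add, eval_mul]; ring
    rw [intervalIntegral.integral_congr (g := fun x => c₁^2 * x^2 + 2*c₁*c₀ * x + c₀^2)
      (fun x _ => this x)]
    rw [intervalIntegral.integral_add, intervalIntegral.integral_add,
      intervalIntegral.integral_const_mul, intervalIntegral.integral_const_mul,
      integral_pow, integral_id, intervalIntegral.integral_const]
    · norm_num; ring
    all_goals apply Continuous.intervalIntegrable; fun_prop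
  rw [hI1, hI2]
  have hba : b - a = 1/(n:ℝ) := by rw [hb]; ring
  have hG : c₁^2*((b^3-a^3)/3) + 2*c₁*c₀*((b^2-a^2)/2) + c₀^2*(b-a)
      = (b-a) * (c₁^2*(a^2+a*b+b^2)/3 + c₁*c₀*(a+b) + c₀^2) := by ring
  have key : c₁^2*(b-a)^2 ≤ 12 * (c₁^2*(a^2+a*b+b^2)/3 + c₁*c₀*(a+b) + c₀^2) := by
    nlinarith [sq_nonneg (2*c₀ + c₁*(a+b))]
  rw [hG, hba]
  rw [hba] at key
  set G := c₁^2*(a^2+a*b+b^2)/3 + c₁*c₀*(a+b) + c₀^2 with hGdef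
  calc c₁^2 * (1/(n:ℝ)) = (n:ℝ) * (c₁^2 * (1/(n:ℝ))^2) := by field_simp
    _ ≤ (n:ℝ) * (12 * G) := by
        apply mul_le_mul_of_nonneg_left key (le_of_lt hnp)
    _ = 12 * (n:ℝ)^2 * (1/(n:ℝ) * G) := by field_simp

lemma base_sum (n : ℕ) (hn : 1 ≤ n) (q : ℕ → Polynomial ℝ)
    (hdeg : ∀ i, i < n → (q i).natDegree ≤ 1) :
    Jint n (fun i => (q i).derivative) (fun i => (q i).derivative) ≤ 12 * (n:ℝ)^2 * Jint n q q := by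
  rw [Jint, Jint, Finset.mul_sum]
  apply Finset.sum_le_sum
  intro i hi
  rw [Finset.mem_range] at hi
  have hsplit : ((i:ℝ)+1)/n = (i:ℝ)/n + 1/n := by ring
  rw [hsplit]
  exact elem_base n hn ((i:ℝ)/n) (q i) (hdeg i hi)

lemma iter_dd (k : ℕ) (P : Polynomial ℝ) :
    derivative^[k] (derivative (derivative P)) = derivative^[k+2] P := by
  rw [Function.iterate_succ_apply, Function.iterate_succ_apply]

lemma sqle {K M c : ℝ} (hK : 0 ≤ K) (hM : 0 ≤ M) (hc : 0 ≤ c) (h : K^2 ≤ c * M * K) :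
    K ≤ c * M := by
  rcases eq_or_lt_of_le hK with h0 | h0
  · rw [← h0]; positivity
  · have := le_of_mul_le_mul_right (by nlinarith : K * K ≤ (c*M) * K) h0
    exact this

theorem polyMain (n : ℕ) (hn : 1 ≤ n) :
    ∀ p : ℕ, 1 ≤ p → ∀ q : ℕ → Polynomial ℝ,
    (∀ i, i < n → (q i).natDegree ≤ p) →
    (∀ k, k < p → ∀ i, 1 ≤ i → i < n →
      (derivative^[k] (q (i-1))).eval ((i:ℝ)/n) = (derivative^[k] (q i)).eval ((i:ℝ)/n)) →
    (∀ l, 2*l+1 < p → (derivative^[2*l+1] (q 0)).eval 0 = 0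
      ∧ (derivative^[2*l+1] (q (n-1))).eval 1 = 0) →
    Jint n (fun i => (q i).derivative) (fun i => (q i).derivative) ≤ 12 * (n:ℝ)^2 * Jint n q q := by
  intro p
  induction p using Nat.strong_induction_on with
  | _ p IH =>
  intro hp q hdeg hmatch hend
  rcases eq_or_lt_of_le hp with hp1 | hp2
  · -- p = 1
    exact base_sum n hn q (fun i hi => by have := hdeg i hi; omega)
  -- p ≥ 2
  have hKM : Jint n (fun i => (q i).derivative) (fun i => (q i).derivative)
      = - Jint n q (fun i => ((q i).derivative).derivative) := by
    apply Jint_ibp n hn q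
    · intro i h1i hin
      rw [eval_mul, eval_mul]
      have e0 := hmatch 0 (by omega) i h1i hin
      have e1 := hmatch 1 (by omega) i h1i hin
      simp only [Function.iterate_zero, id_eq, Function.iterate_one] at e0 e1
      rw [e0, e1]
    · rw [eval_mul]
      have := (hend 0 (by omega)).1
      simp only [Nat.mul_zero, Nat.zero_add, Function.iterate_one] at this
      rw [this, mul_zero]
    · rw [eval_mul]
      have := (hend 0 (by omega)).2
      simp only [Nat.mul_zero, Nat.zero_add, Function.iterate_one] at this
      rw [this, mul_zero]
  have hcs : (Jint n q (fun i => ((q i).derivative).derivative))^2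
      ≤ Jint n q q * Jint n (fun i => ((q i).derivative).derivative)
          (fun i => ((q i).derivative).derivative) := Jint_cs n hn _ _
  set K := Jint n (fun i => (q i).derivative) (fun i => (q i).derivative) with hKdef
  set M := Jint n q q with hMdef
  set M₂ := Jint n (fun i => ((q i).derivative).derivative)
      (fun i => ((q i).derivative).derivative) with hM2def
  have hKnn : 0 ≤ K := Jint_nonneg n hn _
  have hMnn : 0 ≤ M := Jint_nonneg n hn _
  have hM2nn : 0 ≤ M₂ := Jint_nonneg n hn _
  have hKsq : K^2 ≤ M * M₂ := by
    calc K^2 = (Jint n q (fun i => ((q i).derivative).derivative))^2 := by rw [hKM]; ring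
      _ ≤ M * M₂ := hcs
  -- now prove M₂ ≤ 12 n² K
  have hM2K : M₂ ≤ 12 * (n:ℝ)^2 * K := by
    rcases eq_or_lt_of_le (Nat.succ_le_of_lt hp2) with hp2' | hp3
    · -- p = 2: apply base_sum to the derivative family
      have hdeg' : ∀ i, i < n → ((q i).derivative).natDegree ≤ 1 := by
        intro i hi
        have := Polynomial.natDegree_derivative_le (q i)
        have h2 := hdeg i hi
        omega
      exact base_sum n hn (fun i => (q i).derivative) hdeg'
    · -- p ≥ 3
      have hM2eq : M₂ = - Jint n (fun i => (q i).derivative)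
          (fun i => (((q i).derivative).derivative).derivative) := by
        apply Jint_ibp n hn (fun i => (q i).derivative)
        · intro i h1i hin
          rw [eval_mul, eval_mul]
          have e1 := hmatch 1 (by omega) i h1i hin
          have e2 := hmatch 2 (by omega) i h1i hin
          simp only [Function.iterate_one] at e1
          have e2' : (derivative (derivative (q (i-1)))).eval ((i:ℝ)/n)
              = (derivative (derivative (q i))).eval ((i:ℝ)/n) := by
            have : ∀ P : Polynomial ℝ, derivative^[2] P = derivative (derivative P) := by
              intro P; rw [Function.iterate_succ_apply, Function.iterate_one]
            rw [← this, ← this]; exact e2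
          rw [e1, e2']
        · rw [eval_mul]
          have := (hend 0 (by omega)).1
          simp only [Nat.mul_zero, Nat.zero_add, Function.iterate_one] at this
          rw [this, zero_mul]
        · rw [eval_mul]
          have := (hend 0 (by omega)).2
          simp only [Nat.mul_zero, Nat.zero_add, Function.iterate_one] at this
          rw [this, zero_mul]
      have hK2 : Jint n (fun i => (((q i).derivative).derivative).derivative)
          (fun i => (((q i).derivative).derivative).derivative)
          ≤ 12 * (n:ℝ)^2 * M₂ := by
        have hdeg2 : ∀ i, i < n → (((q i).derivative).derivative).natDegree ≤ p - 2 := by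
          intro i hi
          have h1 := Polynomial.natDegree_derivative_le (q i)
          have h2 := Polynomial.natDegree_derivative_le ((q i).derivative)
          have h3 := hdeg i hi
          omega
        have hmatch2 : ∀ k, k < p - 2 → ∀ i, 1 ≤ i → i < n →
            (derivative^[k] (((q (i-1)).derivative).derivative)).eval ((i:ℝ)/n)
              = (derivative^[k] (((q i).derivative).derivative)).eval ((i:ℝ)/n) := by
          intro k hk i h1i hin
          rw [iter_dd, iter_dd]
          exact hmatch (k+2) (by omega) i h1i hin
        have hend2 : ∀ l, 2*l+1 < p - 2 →
            (derivative^[2*l+1] (((q 0).derivative).derivative)).eval 0 = 0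
              ∧ (derivative^[2*l+1] (((q (n-1)).derivative).derivative)).eval 1 = 0 := by
          intro l hl
          simp only [iter_dd]
          have h := hend (l+1) (by omega)
          have he : 2*(l+1)+1 = 2*l+1+2 := by ring
          rw [he] at h
          exact h
        have h := IH (p-2) (by omega) (by omega)
          (fun i => ((q i).derivative).derivative) hdeg2 hmatch2 hend2
        rw [hM2def]
        exact h
      have h6 := Jint_cs n hn (fun i => (q i).derivative)
        (fun i => (((q i).derivative).derivative).derivative)
      rw [← hKdef] at h6
      have hM2sq : M₂^2 ≤ (12*(n:ℝ)^2*K) * M₂ := by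
        have h5 : M₂^2 = (Jint n (fun i => (q i).derivative)
            (fun i => (((q i).derivative).derivative).derivative))^2 := by
          rw [hM2eq]; ring
        calc M₂^2 = _ := h5
          _ ≤ K * (Jint n (fun i => (((q i).derivative).derivative).derivative)
              (fun i => (((q i).derivative).derivative).derivative)) := h6
          _ ≤ K * (12 * (n:ℝ)^2 * M₂) := mul_le_mul_of_nonneg_left hK2 hKnn
          _ = (12*(n:ℝ)^2*K) * M₂ := by ring
      exact sqle hM2nn hKnn (by positivity) hM2sq
  -- combine
  have : K^2 ≤ (12 * (n:ℝ)^2 * M) * K := by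
    calc K^2 ≤ M * M₂ := hKsq
      _ ≤ M * (12 * (n:ℝ)^2 * K) := by
          apply mul_le_mul_of_nonneg_left hM2K hMnn
      _ = (12 * (n:ℝ)^2 * M) * K := by ring
  exact sqle hKnn hMnn (by positivity) (by linarith [this])

open Polynomial Set Filter Topology

lemma iteratedDerivWithin_mem_nhds' {k : ℕ} {f : ℝ → ℝ} {s : Set ℝ} {x : ℝ} (h : s ∈ 𝓝 x) :
    iteratedDerivWithin k f s x = iteratedDeriv k f x := by
  rw [iteratedDerivWithin, iteratedDeriv, ← iteratedFDerivWithin_univ,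
    ← Set.univ_inter s, iteratedFDerivWithin_inter h]

lemma iteratedDeriv_poly (k : ℕ) (P : Polynomial ℝ) :
    iteratedDeriv k (fun x => P.eval x) = fun x => (derivative^[k] P).eval x := by
  induction k generalizing P with
  | zero => simp
  | succ k ih =>
    rw [iteratedDeriv_succ']
    have h : (deriv fun x => P.eval x) = fun x => (derivative P).eval x := by
      funext x; exact Polynomial.deriv (𝕜 := ℝ) (p := P)
    rw [h, ih, Function.iterate_succ_apply]

lemma trace_lim {g φ : ℝ → ℝ} {S T : Set ℝ} {c : ℝ} [NeBot (𝓝[T] c)] (hsub : T ⊆ S)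
    (hg : ContinuousWithinAt g S c) (hφ : Continuous φ) (heq : ∀ x ∈ T, g x = φ x) :
    g c = φ c := by
  have h1 : Tendsto g (𝓝[T] c) (𝓝 (g c)) := hg.mono hsub
  have h2 : Tendsto g (𝓝[T] c) (𝓝 (φ c)) := by
    apply Tendsto.congr' ?_ ((hφ.tendsto c).mono_left nhdsWithin_le_nhds)
    filter_upwards [self_mem_nhdsWithin] with x hx using (heq x hx).symm
  exact tendsto_nhds_unique h1 h2

lemma intervalIntegral_congr_Ioo {f g : ℝ → ℝ} {a b : ℝ} (hab : a ≤ b)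
    (h : ∀ x ∈ Set.Ioo a b, f x = g x) :
    ∫ x in a..b, f x = ∫ x in a..b, g x := by
  rw [intervalIntegral.integral_of_le hab, intervalIntegral.integral_of_le hab,
    integral_Ioc_eq_integral_Ioo, integral_Ioc_eq_integral_Ioo]
  exact setIntegral_congr_fun measurableSet_Ioo h

lemma intervalIntegrable_congr_Ioo {f g : ℝ → ℝ} {a b : ℝ} (hab : a ≤ b)
    (h : ∀ x ∈ Set.Ioo a b, f x = g x) (hg : IntervalIntegrable g volume a b) :
    IntervalIntegrable f volume a b := by
  rw [intervalIntegrable_iff_integrableOn_Ioo_of_le hab] at *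
  exact hg.congr_fun (fun x hx => (h x hx).symm) measurableSet_Ioo

theorem stmt6' (p n : ℕ) (hp : 1 ≤ p) (hn : p < n)
    (u : ℝ → ℝ) (hu : IsSplineTilde p n u) :
    Real.sqrt (H1semisq u) ≤ 2 * Real.sqrt 3 * (n : ℝ) * Real.sqrt (L2sq u) := by
  obtain ⟨⟨hsm, hpoly⟩, hbc⟩ := hu
  have hn1 : 1 ≤ n := by omega
  have hnR : (0:ℝ) < n := by exact_mod_cast hn1
  -- choose the polynomial pieces
  have hex : ∀ i : ℕ, ∃ P : Polynomial ℝ, i < n →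
      P.natDegree ≤ p ∧ ∀ x ∈ Set.Icc ((i:ℝ)/n) (((i:ℝ)+1)/n), u x = P.eval x := by
    intro i
    by_cases hi : i < n
    · obtain ⟨P, hP1, hP2⟩ := hpoly (i+1) (by omega) (by omega)
      refine ⟨P, fun _ => ⟨hP1, fun x hx => hP2 x ?_⟩⟩
      push_cast
      have e : ((i:ℝ)+1-1)/(n:ℝ) = (i:ℝ)/n := by ring
      rw [e]
      exact hx
    · exact ⟨0, fun h => absurd h hi⟩
  choose q hq using hex
  -- basic interval inclusions
  have hIccsub : ∀ i : ℕ, i < n → Set.Icc ((i:ℝ)/n) (((i:ℝ)+1)/n) ⊆ Set.Icc 0 1 := by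
    intro i hi
    apply Set.Icc_subset_Icc
    · positivity
    · rw [div_le_one hnR]
      have : (i:ℝ) + 1 ≤ n := by exact_mod_cast hi
      linarith
  have hIoosub : ∀ i : ℕ, i < n → Set.Ioo ((i:ℝ)/n) (((i:ℝ)+1)/n) ⊆ Set.Ioo 0 1 := by
    intro i hi x hx
    have h1 := (hIccsub i hi).trans (Set.Icc_subset_Icc_left le_rfl)
    constructor
    · have : (0:ℝ) ≤ (i:ℝ)/n := by positivity
      linarith [hx.1]
    · have h2 : ((i:ℝ)+1)/n ≤ 1 := by
        rw [div_le_one hnR]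
        have : (i:ℝ) + 1 ≤ n := by exact_mod_cast hi
        linarith
      linarith [hx.2]
  -- values of iterated derivatives in element interiors
  have hginterior : ∀ k : ℕ, ∀ i, i < n → ∀ x ∈ Set.Ioo ((i:ℝ)/n) (((i:ℝ)+1)/n),
      iteratedDerivWithin k u (Set.Icc 0 1) x = (derivative^[k] (q i)).eval x := by
    intro k i hi x hx
    have hx01 := hIoosub i hi hx
    have hnh : Set.Icc (0:ℝ) 1 ∈ 𝓝 x := Icc_mem_nhds hx01.1 hx01.2
    rw [iteratedDerivWithin_mem_nhds' hnh]
    have huq : u =ᶠ[𝓝 x] fun y => (q i).eval y := by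
      filter_upwards [Ioo_mem_nhds hx.1 hx.2] with y hy
      exact (hq i hi).2 y (Set.Ioo_subset_Icc_self hy)
    rw [huq.iteratedDeriv_eq k]
    exact congrFun (iteratedDeriv_poly k (q i)) x
  -- pointwise derivative in element interiors
  have hderiv : ∀ i, i < n → ∀ x ∈ Set.Ioo ((i:ℝ)/n) (((i:ℝ)+1)/n),
      deriv u x = (derivative (q i)).eval x := by
    intro i hi x hx
    have huq : u =ᶠ[𝓝 x] fun y => (q i).eval y := by
      filter_upwards [Ioo_mem_nhds hx.1 hx.2] with y hy
      exact (hq i hi).2 y (Set.Ioo_subset_Icc_self hy)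
    rw [huq.deriv_eq]
    exact Polynomial.deriv (𝕜 := ℝ) (p := q i)
  -- continuity of iterated derivatives up to order p-1
  have hgcont : ∀ k : ℕ, k ≤ p - 1 →
      ContinuousOn (iteratedDerivWithin k u (Set.Icc 0 1)) (Set.Icc 0 1) := by
    intro k hk
    apply hsm.continuousOn_iteratedDerivWithin ?_ uniqueDiffOn_Icc_zero_one
    exact_mod_cast hk
  -- matching conditions at the knots
  have hmatch : ∀ k, k < p → ∀ i, 1 ≤ i → i < n →
      (derivative^[k] (q (i-1))).eval ((i:ℝ)/n) = (derivative^[k] (q i)).eval ((i:ℝ)/n) := by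
    intro k hk i h1 h2
    have hcast : ((i-1 : ℕ) : ℝ) = (i:ℝ) - 1 := by
      push_cast [h1]; ring
    have hlt : ((i:ℝ)-1)/n < (i:ℝ)/n := by
      apply div_lt_div_of_pos_right ?_ hnR <;> linarith
    have hlt2 : (i:ℝ)/n < ((i:ℝ)+1)/n := by
      apply div_lt_div_of_pos_right ?_ hnR <;> linarith
    have hmem : (i:ℝ)/n ∈ Set.Icc (0:ℝ) 1 := by
      constructor
      · positivity
      · rw [div_le_one hnR]; exact_mod_cast Nat.le_of_lt h2
    have hcw := (hgcont k (by omega)).continuousWithinAt hmem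
    haveI : NeBot (𝓝[Set.Ioo (((i:ℝ)-1)/n) ((i:ℝ)/n)] ((i:ℝ)/n)) :=
      right_nhdsWithin_Ioo_neBot hlt
    haveI : NeBot (𝓝[Set.Ioo ((i:ℝ)/n) (((i:ℝ)+1)/n)] ((i:ℝ)/n)) :=
      left_nhdsWithin_Ioo_neBot hlt2
    have hL : iteratedDerivWithin k u (Set.Icc 0 1) ((i:ℝ)/n)
        = (derivative^[k] (q (i-1))).eval ((i:ℝ)/n) := by
      have hsub : Set.Ioo (((i:ℝ)-1)/n) ((i:ℝ)/n) ⊆ Set.Icc (0:ℝ) 1 := by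
        intro x hx
        apply Set.Ioo_subset_Icc_self
        apply hIoosub (i-1) (by omega)
        rw [hcast]
        have e : ((i:ℝ)-1+1)/n = (i:ℝ)/n := by ring
        rw [e]
        exact hx
      have heq : ∀ x ∈ Set.Ioo (((i:ℝ)-1)/n) ((i:ℝ)/n),
          iteratedDerivWithin k u (Set.Icc 0 1) x
            = (fun y => (derivative^[k] (q (i-1))).eval y) x := by
        intro x hx
        apply hginterior k (i-1) (by omega)
        rw [hcast]
        have e : ((i:ℝ)-1+1)/n = (i:ℝ)/n := by ring
        rw [e]
        exact hx
      exact trace_lim hsub hcw (Polynomial.continuous _) heq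
    have hR : iteratedDerivWithin k u (Set.Icc 0 1) ((i:ℝ)/n)
        = (derivative^[k] (q i)).eval ((i:ℝ)/n) := by
      have hsub : Set.Ioo ((i:ℝ)/n) (((i:ℝ)+1)/n) ⊆ Set.Icc (0:ℝ) 1 := by
        intro x hx
        exact Set.Ioo_subset_Icc_self (hIoosub i h2 hx)
      have heq : ∀ x ∈ Set.Ioo ((i:ℝ)/n) (((i:ℝ)+1)/n),
          iteratedDerivWithin k u (Set.Icc 0 1) x
            = (fun y => (derivative^[k] (q i)).eval y) x := hginterior k i h2
      exact trace_lim hsub hcw (Polynomial.continuous _) heq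
    exact hL.symm.trans hR
  -- endpoint conditions
  have hend : ∀ l, 2*l+1 < p → (derivative^[2*l+1] (q 0)).eval 0 = 0
      ∧ (derivative^[2*l+1] (q (n-1))).eval 1 = 0 := by
    intro l hl
    obtain ⟨hb0, hb1⟩ := hbc l hl
    have hinvn : (0:ℝ) < 1/n := by positivity
    constructor
    · haveI : NeBot (𝓝[Set.Ioo (0:ℝ) (1/n)] (0:ℝ)) :=
        left_nhdsWithin_Ioo_neBot hinvn
      have h0 : iteratedDerivWithin (2*l+1) u (Set.Icc 0 1) 0
          = (derivative^[2*l+1] (q 0)).eval 0 := by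
        have hsub : Set.Ioo (0:ℝ) (1/n) ⊆ Set.Icc (0:ℝ) 1 := by
          intro x hx
          constructor
          · exact le_of_lt hx.1
          · have : 1/(n:ℝ) ≤ 1 := by
              rw [div_le_one hnR]; exact_mod_cast hn1
            exact le_trans (le_of_lt hx.2) this
        have hcw0 := (hgcont (2*l+1) (by omega)).continuousWithinAt
          (Set.left_mem_Icc.mpr zero_le_one)
        have heq : ∀ x ∈ Set.Ioo (0:ℝ) (1/n),
            iteratedDerivWithin (2*l+1) u (Set.Icc 0 1) x
              = (fun y => (derivative^[2*l+1] (q 0)).eval y) x := by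
          intro x hx
          have e0 : ((0:ℕ):ℝ)/n = 0 := by norm_num
          have e1 : (((0:ℕ):ℝ)+1)/n = 1/n := by norm_num
          apply hginterior (2*l+1) 0 (by omega)
          rw [e0, e1]
          exact hx
        exact trace_lim hsub hcw0 (Polynomial.continuous _) heq
      rw [← h0]; exact hb0
    · have hcast : ((n-1 : ℕ) : ℝ) = (n:ℝ) - 1 := by push_cast [hn1]; ring
      have hlt : ((n:ℝ)-1)/n < 1 := by
        rw [div_lt_one hnR]; linarith
      haveI : NeBot (𝓝[Set.Ioo (((n:ℝ)-1)/n) (1:ℝ)] (1:ℝ)) :=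
        right_nhdsWithin_Ioo_neBot hlt
      have h1 : iteratedDerivWithin (2*l+1) u (Set.Icc 0 1) 1
          = (derivative^[2*l+1] (q (n-1))).eval 1 := by
        have hsub : Set.Ioo (((n:ℝ)-1)/n) (1:ℝ) ⊆ Set.Icc (0:ℝ) 1 := by
          intro x hx
          constructor
          · have : (0:ℝ) ≤ ((n:ℝ)-1)/n := by
              apply div_nonneg ?_ (le_of_lt hnR)
              have : (1:ℝ) ≤ n := by exact_mod_cast hn1
              linarith
            linarith [hx.1]
          · exact le_of_lt hx.2
        have hcw1 := (hgcont (2*l+1) (by omega)).continuousWithinAt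
          (Set.right_mem_Icc.mpr zero_le_one)
        have heq : ∀ x ∈ Set.Ioo (((n:ℝ)-1)/n) (1:ℝ),
            iteratedDerivWithin (2*l+1) u (Set.Icc 0 1) x
              = (fun y => (derivative^[2*l+1] (q (n-1))).eval y) x := by
          intro x hx
          apply hginterior (2*l+1) (n-1) (by omega)
          rw [hcast]
          have e : ((n:ℝ)-1+1)/n = 1 := by field_simp; ring
          rw [e]
          exact hx
        exact trace_lim hsub hcw1 (Polynomial.continuous _) heq
      rw [← h1]; exact hb1
  -- integral identities
  have hcont_u : ContinuousOn u (Set.Icc 0 1) := by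
    have := hsm.continuousOn
    exact this
  have hL2 : L2sq u = Jint n q q := by
    rw [L2sq, Jint]
    have hadj := intervalIntegral.sum_integral_adjacent_intervals
      (a := fun i : ℕ => (i:ℝ)/n) (n := n) (f := fun x => u x ^ 2) (μ := volume) ?_
    · have e0 : ((0:ℕ):ℝ)/n = 0 := by norm_num
      have e1 : ((n:ℕ):ℝ)/n = 1 := by field_simp
      rw [e0, e1] at hadj
      rw [← hadj]
      apply Finset.sum_congr rfl
      intro i hi
      rw [Finset.mem_range] at hi
      have ecast : ((i+1 : ℕ):ℝ)/n = ((i:ℝ)+1)/n := by push_cast; ring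
      rw [ecast]
      apply intervalIntegral.integral_congr
      intro x hx
      rw [Set.uIcc_of_le (knot_le n i hn1)] at hx
      show u x ^ 2 = eval x (q i) * eval x (q i)
      rw [(hq i hi).2 x hx]
      ring
    · intro i hi
      have ecast : ((i+1 : ℕ):ℝ)/n = ((i:ℝ)+1)/n := by push_cast; ring
      simp only [ecast]
      apply ContinuousOn.intervalIntegrable
      rw [Set.uIcc_of_le (knot_le n i hn1)]
      exact ((hcont_u.mono (hIccsub i hi)).pow 2)
  have hH1 : H1semisq u = Jint n (fun i => (q i).derivative) (fun i => (q i).derivative) := by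
    rw [H1semisq, Jint]
    have hadj := intervalIntegral.sum_integral_adjacent_intervals
      (a := fun i : ℕ => (i:ℝ)/n) (n := n) (f := fun x => deriv u x ^ 2) (μ := volume) ?_
    · have e0 : ((0:ℕ):ℝ)/n = 0 := by norm_num
      have e1 : ((n:ℕ):ℝ)/n = 1 := by field_simp
      rw [e0, e1] at hadj
      rw [← hadj]
      apply Finset.sum_congr rfl
      intro i hi
      rw [Finset.mem_range] at hi
      have ecast : ((i+1 : ℕ):ℝ)/n = ((i:ℝ)+1)/n := by push_cast; ring
      rw [ecast]
      apply intervalIntegral_congr_Ioo (knot_le n i hn1)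
      intro x hx
      rw [hderiv i hi x hx]
      ring
    · intro i hi
      have ecast : ((i+1 : ℕ):ℝ)/n = ((i:ℝ)+1)/n := by push_cast; ring
      simp only [ecast]
      apply intervalIntegrable_congr_Ioo (knot_le n i hn1)
        (g := fun x => ((q i).derivative).eval x ^ 2)
      · intro x hx
        rw [hderiv i hi x hx]
      · apply Continuous.intervalIntegrable
        fun_prop
  -- apply the main polynomial inequality
  have hmain := polyMain n hn1 p hp q (fun i hi => (hq i hi).1) hmatch hend
  have hineq : H1semisq u ≤ 12 * (n:ℝ)^2 * L2sq u := by
    rw [hH1, hL2]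
    exact hmain
  have hL2nn : 0 ≤ L2sq u := by
    rw [hL2]
    exact Jint_nonneg n hn1 q
  calc Real.sqrt (H1semisq u) ≤ Real.sqrt (12 * (n:ℝ)^2 * L2sq u) := Real.sqrt_le_sqrt hineq
    _ = 2 * Real.sqrt 3 * (n : ℝ) * Real.sqrt (L2sq u) := by
        have h3 : (Real.sqrt 3)^2 = 3 := Real.sq_sqrt (by norm_num)
        have e : 12 * (n:ℝ)^2 * L2sq u = (2 * Real.sqrt 3 * (n:ℝ))^2 * L2sq u := by
          have : (2 * Real.sqrt 3 * (n:ℝ))^2 = 4 * (Real.sqrt 3)^2 * (n:ℝ)^2 := by ring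
          rw [this, h3]
          ring
        rw [e, Real.sqrt_mul (sq_nonneg _), Real.sqrt_sq (by positivity)]

/-- robust inverse inequality in `S̃_{p,n}`:
`|u|_{H¹(0,1)} ≤ 2√3 · n · ‖u‖_{L²(0,1)}` for every `u ∈ S̃_{p,n}`, `n > p ≥ 1`. -/
theorem stmt6 (p n : ℕ) (hp : 1 ≤ p) (hn : p < n)
    (u : ℝ → ℝ) (hu : IsSplineTilde p n u) :
    Real.sqrt (H1semisq u) ≤ 2 * Real.sqrt 3 * (n : ℝ) * Real.sqrt (L2sq u) :=
  stmt6' p n hp hn u hu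
end
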